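/- arXiv:1109.1006 — 4 statements merged into one kernel-verified Lean document; each statement's English description precedes it below -/
import Mathlib

section
/- (Operator form of the interpolation condition, case q = 1.) Let 1 < p₁, p₂ < ∞ with pⱼ' = pⱼ/(pⱼ−1), let 0 < θ < 1, and define r and s by 1/r = θ/p₂' and 1 − 1/s = (1−θ)/p₁'. For a measurable f : Ω₁ × Ω₂ → ℝ, the following are equivalent, with the two quantities below equivalent up to constants depending only on p₁, p₂, θ: (a) M(f) := sup over measurable sets E₁ ⊆ Ω₁, E₂ ⊆ Ω₂ of finite positive measure of (∫_{E₁×E₂} |f| d(μ₁×μ₂)) · μ₁(E₁)^{−(1−θ)/p₁'} · μ₂(E₂)^{−θ/p₂'} is finite; (b) the positive kernel operator T_{|f|}g(x) := ∫ |f(x,y)| g(y) dμ₂(y) is bounded from L_{r,1}(μ₂) to L_{s,∞}(μ₁), i.e. there is C < ∞ such that for every measurable g : Ω₂ → ℝ, sup_{c>0} c · μ₁({x : |T_{|f|}g(x)| > c})^{1/s} ≤ C · ∫₀^∞ μ₂({y : |g(y)| > c})^{1/r} dc. -/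
open MeasureTheory ENNReal NNReal

/-- The quantity `M(f)`: supremum over measurable sets `E₁, E₂` of finite positive measure of
`(∫_{E₁×E₂} |f|) · μ₁(E₁)^{-(1-θ)/p₁'} · μ₂(E₂)^{-θ/p₂'}`. -/
noncomputable def Mfunc {Ω₁ Ω₂ : Type*} [MeasurableSpace Ω₁] [MeasurableSpace Ω₂]
    (μ₁ : Measure Ω₁) (μ₂ : Measure Ω₂) (p₁' p₂' θ : ℝ) (f : Ω₁ × Ω₂ → ℝ) : ℝ≥0∞ :=
  ⨆ (E₁ : Set Ω₁) (E₂ : Set Ω₂) (_ : MeasurableSet E₁) (_ : MeasurableSet E₂)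
    (_ : 0 < μ₁ E₁) (_ : μ₁ E₁ < ∞) (_ : 0 < μ₂ E₂) (_ : μ₂ E₂ < ∞),
    (∫⁻ x in E₁ ×ˢ E₂, ‖f x‖₊ ∂(μ₁.prod μ₂)) *
      μ₁ E₁ ^ (-(1 - θ) / p₁') * μ₂ E₂ ^ (-θ / p₂')

/-- The Lorentz `L_{r,1}` norm `[g]_{r,1} = ∫₀^∞ μ({|g| > c})^{1/r} dc`. -/
noncomputable def lorentzNorm {Ω : Type*} [MeasurableSpace Ω]
    (μ : Measure Ω) (r : ℝ) (g : Ω → ℝ) : ℝ≥0∞ :=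
  ∫⁻ c in Set.Ioi (0 : ℝ), μ {y | c < |g y|} ^ (1 / r)

/-- The weak `L_s` quasi-norm of an `ℝ≥0∞`-valued function:
`sup_{c>0} c · μ({h > c})^{1/s}`. -/
noncomputable def weakNormE {Ω : Type*} [MeasurableSpace Ω]
    (μ : Measure Ω) (s : ℝ) (h : Ω → ℝ≥0∞) : ℝ≥0∞ :=
  ⨆ c : ℝ≥0, (c : ℝ≥0∞) * μ {x | (c : ℝ≥0∞) < h x} ^ (1 / s)

/-- The positive kernel operator `T_{|f|}` applied to `|g|`:
`x ↦ ∫ |f(x,y)| |g(y)| dμ₂(y)`. -/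
noncomputable def kernelOp {Ω₁ Ω₂ : Type*} [MeasurableSpace Ω₁] [MeasurableSpace Ω₂]
    (μ₂ : Measure Ω₂) (f : Ω₁ × Ω₂ → ℝ) (g : Ω₂ → ℝ) (x : Ω₁) : ℝ≥0∞ :=
  ∫⁻ y, (‖f (x, y)‖₊ : ℝ≥0∞) * ‖g y‖₊ ∂μ₂

open Set

section AuxLemmas
variable {Ω : Type*} {Ω₁ : Type*} {Ω₂ : Type*} [MeasurableSpace Ω] [MeasurableSpace Ω₁] [MeasurableSpace Ω₂]

lemma lintegral_ite_one {α : Type*} [MeasurableSpace α] (μ : Measure α) {S : Set α}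
    (hS : MeasurableSet S) [∀ a, Decidable (a ∈ S)] :
    ∫⁻ a, (if a ∈ S then (1:ℝ≥0∞) else 0) ∂μ = μ S := by
  rw [show (fun a => (if a ∈ S then (1:ℝ≥0∞) else 0)) = S.indicator (fun _ => (1:ℝ≥0∞)) by
    ext a; simp [Set.indicator_apply]]
  rw [lintegral_indicator hS, setLIntegral_one]

lemma layercakeE (μ : Measure Ω) [SigmaFinite μ] {h : Ω → ℝ≥0∞} (hm : Measurable h) :
    ∫⁻ x, h x ∂μ = ∫⁻ t in Ioi (0:ℝ), μ {x | ENNReal.ofReal t < h x} := by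
  have hT : MeasurableSet {p : Ω × ℝ | ENNReal.ofReal p.2 < h p.1} :=
    measurableSet_lt (measurable_snd.ennreal_ofReal) (hm.comp measurable_fst)
  have F_meas : Measurable (fun p : Ω × ℝ =>
      (if ENNReal.ofReal p.2 < h p.1 then (1:ℝ≥0∞) else 0)) :=
    Measurable.ite hT measurable_const measurable_const
  have key : ∀ x, h x = ∫⁻ t in Ioi (0:ℝ), (if ENNReal.ofReal t < h x then (1:ℝ≥0∞) else 0) := by
    intro x
    have hset : MeasurableSet {t : ℝ | ENNReal.ofReal t < h x} :=
      ENNReal.measurable_ofReal measurableSet_Iio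
    have : ∫⁻ t in Ioi (0:ℝ), (if ENNReal.ofReal t < h x then (1:ℝ≥0∞) else 0)
        = (volume.restrict (Ioi (0:ℝ))) {t : ℝ | ENNReal.ofReal t < h x} := by
      have := lintegral_ite_one (volume.restrict (Ioi (0:ℝ))) (S := {t : ℝ | ENNReal.ofReal t < h x}) hset
      simpa using this
    rw [this, Measure.restrict_apply hset]
    by_cases hx : h x = ∞
    · have hseq : {t : ℝ | ENNReal.ofReal t < h x} ∩ Ioi 0 = Ioi 0 := by
        ext t; simp [hx, ENNReal.ofReal_lt_top]
      rw [hseq, hx, Real.volume_Ioi]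
    · have hseq : {t : ℝ | ENNReal.ofReal t < h x} ∩ Ioi 0 = Ioo 0 (h x).toReal := by
        ext t
        simp only [mem_inter_iff, mem_setOf_eq, mem_Ioi, mem_Ioo]
        constructor
        · rintro ⟨h1, h2⟩
          exact ⟨h2, (ENNReal.ofReal_lt_iff_lt_toReal h2.le hx).mp h1⟩
        · rintro ⟨h1, h2⟩
          exact ⟨(ENNReal.ofReal_lt_iff_lt_toReal h1.le hx).mpr h2, h1⟩
      rw [hseq, Real.volume_Ioo, sub_zero, ENNReal.ofReal_toReal hx]
  calc ∫⁻ x, h x ∂μ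
      = ∫⁻ x, (∫⁻ t in Ioi (0:ℝ), (if ENNReal.ofReal t < h x then (1:ℝ≥0∞) else 0)) ∂μ :=
        lintegral_congr key
    _ = ∫⁻ t in Ioi (0:ℝ), (∫⁻ x, (if ENNReal.ofReal t < h x then (1:ℝ≥0∞) else 0) ∂μ) :=
        lintegral_lintegral_swap (F_meas.aemeasurable)
    _ = ∫⁻ t in Ioi (0:ℝ), μ {x | ENNReal.ofReal t < h x} := by
        refine lintegral_congr fun t => ?_
        have hset : MeasurableSet {x : Ω | ENNReal.ofReal t < h x} := hm measurableSet_Ioi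
        exact lintegral_ite_one μ hset

lemma weakNormE_zero (μ : Measure Ω) {h : Ω → ℝ≥0∞} {s : ℝ} (hs : 0 < s)
    (hW : weakNormE μ s h = 0) : ∀ᵐ x ∂μ, h x = 0 := by
  have hnull : ∀ c : ℝ≥0, 0 < c → μ {x | (c : ℝ≥0∞) < h x} = 0 := by
    intro c hc
    have hle : (c : ℝ≥0∞) * μ {x | (c : ℝ≥0∞) < h x} ^ (1/s) ≤ 0 := hW ▸ le_iSup
      (fun c : ℝ≥0 => (c : ℝ≥0∞) * μ {x | (c : ℝ≥0∞) < h x} ^ (1 / s)) c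
    have hcne : (c : ℝ≥0∞) ≠ 0 := by exact_mod_cast hc.ne'
    have h0 : μ {x | (c : ℝ≥0∞) < h x} ^ (1/s) = 0 := by
      by_contra hne
      exact hne (by simpa [hcne] using (le_zero_iff.mp hle))
    rw [ENNReal.rpow_eq_zero_iff] at h0
    rcases h0 with ⟨h1, _⟩ | ⟨_, h2⟩
    · exact h1
    · exfalso; linarith [h2, one_div_pos.mpr hs]
  have : μ {x | h x ≠ 0} = 0 := by
    have hcov : {x | h x ≠ 0} ⊆ ⋃ n : ℕ, {x | ((((n:ℝ≥0)+1)⁻¹ : ℝ≥0) : ℝ≥0∞) < h x} := by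
      intro x hx
      obtain ⟨n, hn⟩ := ENNReal.exists_inv_nat_lt (hx : h x ≠ 0)
      refine Set.mem_iUnion.mpr ⟨n, ?_⟩
      refine lt_of_le_of_lt ?_ hn
      rw [ENNReal.coe_inv (by positivity)]
      refine ENNReal.inv_le_inv.mpr ?_
      push_cast
      exact le_self_add
    refine measure_mono_null hcov ?_
    refine measure_iUnion_null fun n => hnull _ (by positivity)
  filter_upwards [measure_eq_zero_iff_ae_notMem.mp this] with x hx
  simpa using hx

lemma weakNormE_le (μ : Measure Ω) [SigmaFinite μ] {h : Ω → ℝ≥0∞} (hm : Measurable h)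
    {s : ℝ} (hs : 0 < s) {B : ℝ≥0∞}
    (hb : ∀ A : Set Ω, MeasurableSet A → 0 < μ A → μ A < ∞ → ∀ c : ℝ≥0, 0 < c →
      (∀ x ∈ A, (c : ℝ≥0∞) < h x) → (c : ℝ≥0∞) * μ A ≤ B * μ A ^ (1 - 1/s)) :
    weakNormE μ s h ≤ B := by
  refine iSup_le fun c => ?_
  rcases eq_or_lt_of_le (zero_le : 0 ≤ c) with hc0 | hc0
  · simp [← hc0]
  rcases eq_or_ne B ∞ with hB | hB
  · simp [hB]
  set Ec := {x | (c : ℝ≥0∞) < h x} with hEc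
  have hEcm : MeasurableSet Ec := hm measurableSet_Ioi
  have hcne : (c : ℝ≥0∞) ≠ 0 := by exact_mod_cast hc0.ne'
  have hcnt : (c : ℝ≥0∞) ≠ ∞ := ENNReal.coe_ne_top
  -- claim : μ Ec ≤ (B / c) ^ s
  have claim : μ Ec ≤ (B / c) ^ s := by
    have hcover : Ec = ⋃ n, Ec ∩ spanningSets μ n := by
      rw [← Set.inter_iUnion, iUnion_spanningSets, Set.inter_univ]
    have hmono : Monotone fun n => Ec ∩ spanningSets μ n :=
      fun i j hij => Set.inter_subset_inter_right _ (monotone_spanningSets μ hij)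
    rw [hcover, hmono.measure_iUnion]
    refine iSup_le fun n => ?_
    set A := Ec ∩ spanningSets μ n with hA
    rcases eq_or_lt_of_le (zero_le : 0 ≤ μ A) with hA0 | hA0
    · rw [← hA0]; exact zero_le
    have hAm : MeasurableSet A := hEcm.inter (measurableSet_spanningSets μ n)
    have hAfin : μ A < ∞ :=
      lt_of_le_of_lt (measure_mono Set.inter_subset_right) (measure_spanningSets_lt_top μ n)
    have hAsub : ∀ x ∈ A, (c : ℝ≥0∞) < h x := fun x hx => hx.1
    have key := hb A hAm hA0 hAfin c hc0 hAsub
    -- from c * μ A ≤ B * μ A ^ (1 - 1/s), deduce c * μ A ^ (1/s) ≤ B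
    have hApos : μ A ≠ 0 := hA0.ne'
    have hAne : μ A ≠ ∞ := hAfin.ne
    have hsplit : μ A = μ A ^ (1 - 1/s) * μ A ^ (1/s) := by
      rw [← ENNReal.rpow_add _ _ hApos hAne, sub_add_cancel, ENNReal.rpow_one]
    have hXne : μ A ^ (1 - 1/s) ≠ 0 := by
      simp [ENNReal.rpow_eq_zero_iff, hApos, hAne]
    have hXnt : μ A ^ (1 - 1/s) ≠ ∞ := by
      simp [ENNReal.rpow_eq_top_iff, hApos, hAne]
    have key2 : (c : ℝ≥0∞) * μ A ^ (1/s) ≤ B := by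
      have h1 : μ A ^ (1 - 1/s) * ((c : ℝ≥0∞) * μ A ^ (1/s)) ≤ μ A ^ (1 - 1/s) * B := by
        calc μ A ^ (1 - 1/s) * ((c : ℝ≥0∞) * μ A ^ (1/s))
            = (c : ℝ≥0∞) * (μ A ^ (1 - 1/s) * μ A ^ (1/s)) := by ring
          _ = (c : ℝ≥0∞) * μ A := by rw [← hsplit]
          _ ≤ B * μ A ^ (1 - 1/s) := key
          _ = μ A ^ (1 - 1/s) * B := mul_comm _ _
      exact (ENNReal.mul_le_mul_iff_right hXne hXnt).mp h1
    have key3 : μ A ^ (1/s) ≤ B / c := by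
      rw [ENNReal.le_div_iff_mul_le (Or.inl hcne) (Or.inl hcnt), mul_comm]
      exact key2
    calc μ A = (μ A ^ (1/s)) ^ s := by
          rw [← ENNReal.rpow_mul, one_div_mul_cancel hs.ne', ENNReal.rpow_one]
      _ ≤ (B / c) ^ s := ENNReal.rpow_le_rpow key3 hs.le
  have claim2 : μ Ec ^ (1/s) ≤ B / c := by
    calc μ Ec ^ (1/s) ≤ ((B / c) ^ s) ^ (1/s) :=
          ENNReal.rpow_le_rpow claim (by positivity)
      _ = B / c := by rw [← ENNReal.rpow_mul, mul_one_div_cancel hs.ne', ENNReal.rpow_one]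
  calc (c : ℝ≥0∞) * μ Ec ^ (1/s) ≤ (c : ℝ≥0∞) * (B / c) :=
        mul_le_mul_right claim2 _
    _ ≤ B := ENNReal.mul_div_le

lemma lintegral_le_weakNormE (μ : Measure Ω) {h : Ω → ℝ≥0∞} (hm : Measurable h)
    {s : ℝ} (hs : 1 < s) {E : Set Ω} (hE : MeasurableSet E) (hEfin : μ E < ∞) :
    ∫⁻ x in E, h x ∂μ ≤ ENNReal.ofReal (s/(s-1)) * weakNormE μ s h * μ E ^ (1 - 1/s) := by
  have hs0 : (0:ℝ) < s := lt_trans one_pos hs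
  have hs1 : (0:ℝ) < s - 1 := by linarith
  have hexp : (0:ℝ) < 1 - 1/s := by
    rw [sub_pos, div_lt_one hs0]; exact hs
  set W := weakNormE μ s h with hW
  set V := μ E with hV
  rcases eq_or_lt_of_le (zero_le : 0 ≤ V) with hV0 | hV0
  · have : μ.restrict E = 0 := by
      rw [Measure.restrict_eq_zero]; exact hV0.symm
    rw [this]; simp
  rcases eq_or_ne W 0 with hW0 | hW0
  · have hae : ∀ᵐ x ∂μ, h x = 0 := weakNormE_zero μ hs0 hW0
    have : ∫⁻ x in E, h x ∂μ = 0 := by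
      rw [lintegral_eq_zero_iff hm]
      exact ae_restrict_of_ae hae
    rw [this]; exact zero_le
  rcases eq_or_ne W ∞ with hWt | hWt
  · rw [hWt]
    have h1 : ENNReal.ofReal (s/(s-1)) ≠ 0 := by
      simp [ENNReal.ofReal_eq_zero, not_le, div_pos hs0 hs1]
    have h2 : V ^ (1 - 1/s) ≠ 0 := by
      simp [ENNReal.rpow_eq_zero_iff, (show V ≠ 0 from hV0.ne'), hexp.ne', hEfin.ne]
    rw [ENNReal.mul_top h1, ENNReal.top_mul h2]
    exact le_top
  -- main case
  have hVne : V ≠ 0 := hV0.ne'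
  have hVnt : V ≠ ∞ := hEfin.ne
  have : IsFiniteMeasure (μ.restrict E) := ⟨by rwa [Measure.restrict_apply_univ]⟩
  have hlayer : ∫⁻ x in E, h x ∂μ
      = ∫⁻ t in Ioi (0:ℝ), (μ.restrict E) {x | ENNReal.ofReal t < h x} :=
    layercakeE (μ.restrict E) hm
  -- the threshold
  have hWVne : W * V ^ (-(1/s)) ≠ 0 := by
    simp only [ne_eq, mul_eq_zero, not_or]
    exact ⟨hW0, by simp [ENNReal.rpow_eq_zero_iff, hVne, hVnt]⟩
  have hWVnt : W * V ^ (-(1/s)) ≠ ∞ := by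
    refine ENNReal.mul_ne_top hWt ?_
    simp [ENNReal.rpow_eq_top_iff, hVne, hVnt]
  set c₀ : ℝ := (W * V ^ (-(1/s))).toReal with hc₀
  have hc₀pos : 0 < c₀ := ENNReal.toReal_pos hWVne hWVnt
  have hc₀of : ENNReal.ofReal c₀ = W * V ^ (-(1/s)) := ENNReal.ofReal_toReal hWVnt
  -- pointwise bound from the weak norm
  have hweak : ∀ t : ℝ, 0 < t → μ {x | ENNReal.ofReal t < h x} ≤ (W / ENNReal.ofReal t) ^ s := by
    intro t ht
    set c : ℝ≥0 := t.toNNReal with hc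
    have hco : ENNReal.ofReal t = (c : ℝ≥0∞) := rfl
    have hcne : (c : ℝ≥0∞) ≠ 0 := by
      simp [hc, Real.toNNReal_eq_zero, not_le, ht]
    have hle : (c : ℝ≥0∞) * μ {x | (c:ℝ≥0∞) < h x} ^ (1/s) ≤ W :=
      le_iSup (fun c : ℝ≥0 => (c : ℝ≥0∞) * μ {x | (c : ℝ≥0∞) < h x} ^ (1 / s)) c
    have hdiv : μ {x | (c:ℝ≥0∞) < h x} ^ (1/s) ≤ W / c := by
      rw [ENNReal.le_div_iff_mul_le (Or.inl hcne) (Or.inl ENNReal.coe_ne_top), mul_comm]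
      exact hle
    rw [hco]
    calc μ {x | (c:ℝ≥0∞) < h x} = (μ {x | (c:ℝ≥0∞) < h x} ^ (1/s)) ^ s := by
          rw [← ENNReal.rpow_mul, one_div_mul_cancel hs0.ne', ENNReal.rpow_one]
      _ ≤ (W / c) ^ s := ENNReal.rpow_le_rpow hdiv hs0.le
  -- split the integral
  have hsplit : Ioi (0:ℝ) = Ioc (0:ℝ) c₀ ∪ Ioi c₀ := (Set.Ioc_union_Ioi_eq_Ioi hc₀pos.le).symm
  have hdisj : Disjoint (Ioc (0:ℝ) c₀) (Ioi c₀) := by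
    rw [Set.disjoint_left]; intro t ht1 ht2
    exact absurd ht1.2 (not_le.mpr ht2)
  rw [hlayer, hsplit, lintegral_union measurableSet_Ioi hdisj]
  have hpart1 : ∫⁻ t in Ioc (0:ℝ) c₀, (μ.restrict E) {x | ENNReal.ofReal t < h x}
      ≤ W * V ^ (1 - 1/s) := by
    have hb : ∀ t : ℝ, (μ.restrict E) {x | ENNReal.ofReal t < h x} ≤ V := by
      intro t
      calc (μ.restrict E) {x | ENNReal.ofReal t < h x} ≤ (μ.restrict E) Set.univ :=
            measure_mono (Set.subset_univ _)
        _ = V := by rw [Measure.restrict_apply_univ]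
    calc ∫⁻ t in Ioc (0:ℝ) c₀, (μ.restrict E) {x | ENNReal.ofReal t < h x}
        ≤ ∫⁻ _ in Ioc (0:ℝ) c₀, V := lintegral_mono fun t => hb t
      _ = V * ENNReal.ofReal c₀ := by
          rw [setLIntegral_const, Real.volume_Ioc, sub_zero]
      _ = W * (V ^ (1:ℝ) * V ^ (-(1/s))) := by
          rw [hc₀of, ENNReal.rpow_one]; ring
      _ = W * V ^ (1 - 1/s) := by
          rw [← ENNReal.rpow_add _ _ hVne hVnt]
          norm_num [sub_eq_add_neg]
  have hpart2 : ∫⁻ t in Ioi c₀, (μ.restrict E) {x | ENNReal.ofReal t < h x}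
      ≤ ENNReal.ofReal (1/(s-1)) * W * V ^ (1 - 1/s) := by
    have hmono2 : ∫⁻ t in Ioi c₀, (μ.restrict E) {x | ENNReal.ofReal t < h x}
        ≤ ∫⁻ t in Ioi c₀, W ^ s * ENNReal.ofReal (t ^ (-s)) := by
      refine setLIntegral_mono (by fun_prop) fun t ht => ?_
      have ht0 : (0:ℝ) < t := lt_trans hc₀pos ht
      have h1 : (μ.restrict E) {x | ENNReal.ofReal t < h x} ≤ (W / ENNReal.ofReal t) ^ s := by
        refine le_trans (Measure.restrict_le_self _) (hweak t ht0)
      refine le_trans h1 (le_of_eq ?_)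
      rw [ENNReal.div_rpow_of_nonneg _ _ hs0.le, ENNReal.div_eq_inv_mul, mul_comm]
      congr 1
      rw [← ENNReal.ofReal_rpow_of_pos ht0, ENNReal.rpow_neg]
    have hint : ∫⁻ t in Ioi c₀, ENNReal.ofReal (t ^ (-s)) = ENNReal.ofReal (c₀ ^ (1-s) / (s-1)) := by
      rw [← ofReal_integral_eq_lintegral_ofReal
        (integrableOn_Ioi_rpow_of_lt (by linarith) hc₀pos)
        ((ae_restrict_iff' measurableSet_Ioi).mpr (Filter.Eventually.of_forall fun t ht =>
          Real.rpow_nonneg (le_of_lt (lt_trans hc₀pos ht)) _))]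
      rw [integral_Ioi_rpow_of_lt (by linarith) hc₀pos]
      congr 1
      rw [show (-s+1:ℝ) = 1-s by ring]
      have h1s : (1-s:ℝ) ≠ 0 := by linarith
      field_simp
      ring
    have hWsne : W ^ s ≠ ∞ := ENNReal.rpow_ne_top_of_nonneg hs0.le hWt
    have e1 : ENNReal.ofReal (c₀^(1-s)/(s-1))
        = (ENNReal.ofReal c₀)^(1-s) * ENNReal.ofReal (1/(s-1)) := by
      rw [div_eq_mul_one_div, ENNReal.ofReal_mul (Real.rpow_nonneg hc₀pos.le _),
        ENNReal.ofReal_rpow_of_pos hc₀pos]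
    have hVinvnt : V ^ (-(1/s)) ≠ ∞ := by
      simp [ENNReal.rpow_eq_top_iff, hVne, hVnt]
    calc ∫⁻ t in Ioi c₀, (μ.restrict E) {x | ENNReal.ofReal t < h x}
        ≤ ∫⁻ t in Ioi c₀, W ^ s * ENNReal.ofReal (t ^ (-s)) := hmono2
      _ = W ^ s * ∫⁻ t in Ioi c₀, ENNReal.ofReal (t ^ (-s)) :=
          lintegral_const_mul _ (by fun_prop)
      _ = W ^ s * ENNReal.ofReal (c₀^(1-s)/(s-1)) := by rw [hint]
      _ = ENNReal.ofReal (1/(s-1)) * W * V ^ (1 - 1/s) := by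
          rw [e1]
          rw [hc₀of, ENNReal.mul_rpow_of_ne_top hWt hVinvnt, ← ENNReal.rpow_mul]
          rw [show (-(1/s) * (1-s)) = 1 - 1/s by field_simp; ring]
          rw [← mul_assoc, ← mul_assoc, ← ENNReal.rpow_add _ _ hW0 hWt,
            show (s + (1-s)) = (1:ℝ) by ring, ENNReal.rpow_one]
          ring
  calc (∫⁻ t in Ioc (0:ℝ) c₀, (μ.restrict E) {x | ENNReal.ofReal t < h x})
        + ∫⁻ t in Ioi c₀, (μ.restrict E) {x | ENNReal.ofReal t < h x}
      ≤ W * V ^ (1-1/s) + ENNReal.ofReal (1/(s-1)) * W * V ^ (1-1/s) :=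
        add_le_add hpart1 hpart2
    _ = (1 + ENNReal.ofReal (1/(s-1))) * (W * V ^ (1-1/s)) := by ring
    _ = ENNReal.ofReal (s/(s-1)) * W * V ^ (1-1/s) := by
        rw [← ENNReal.ofReal_one, ← ENNReal.ofReal_add (by norm_num) (by positivity),
          show ((1:ℝ) + 1/(s-1)) = s/(s-1) by field_simp; ring]
        ring

lemma kernelOp_measurable {μ₂ : Measure Ω₂} [SigmaFinite μ₂] {f : Ω₁ × Ω₂ → ℝ} {g : Ω₂ → ℝ}
    (hf : Measurable f) (hg : Measurable g) : Measurable (kernelOp μ₂ f g) :=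
  Measurable.lintegral_prod_right' <|
    (hf.nnnorm.coe_nnreal_ennreal).mul ((hg.nnnorm.coe_nnreal_ennreal).comp measurable_snd)

lemma meas_lt_top_of_lorentz {μ : Measure Ω₂} {r : ℝ} (hr : 0 < 1/r) {g : Ω₂ → ℝ}
    (hL : lorentzNorm μ r g < ∞) : ∀ t : ℝ, 0 < t → μ {y | t < |g y|} < ∞ := by
  intro t ht
  by_contra htop
  push_neg at htop
  have htop' : μ {y | t < |g y|} = ∞ := top_le_iff.mp htop
  have hmeas : Measurable fun c : ℝ => μ {y | c < |g y|} ^ (1/r) := by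
    have : Antitone fun c : ℝ => μ {y | c < |g y|} :=
      fun a b hab => measure_mono fun y hy => lt_of_le_of_lt hab hy
    exact (this.measurable).pow_const _
  have hbig : ∫⁻ c in Ioo (0:ℝ) t, (∞:ℝ≥0∞) ≤ ∫⁻ c in Ioo (0:ℝ) t, μ {y | c < |g y|} ^ (1/r) := by
    refine setLIntegral_mono hmeas fun c hc => ?_
    have hsub : μ {y | t < |g y|} ≤ μ {y | c < |g y|} :=
      measure_mono fun y hy => lt_trans hc.2 hy
    rw [htop'] at hsub
    rw [top_le_iff.mp hsub, ENNReal.top_rpow_of_pos hr]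
  have : lorentzNorm μ r g = ∞ := by
    rw [lorentzNorm, eq_top_iff]
    refine le_trans ?_ (lintegral_mono_set (Set.Ioo_subset_Ioi_self : Ioo (0:ℝ) t ⊆ Ioi 0))
    refine le_trans ?_ hbig
    rw [setLIntegral_const, Real.volume_Ioo, sub_zero, ENNReal.top_mul]
    simp [ENNReal.ofReal_eq_zero, not_le, ht]
  exact absurd this (by simpa using hL.ne)

lemma setLIntegral_le_Mfunc (μ₁ : Measure Ω₁) (μ₂ : Measure Ω₂) [SigmaFinite μ₁] [SigmaFinite μ₂]
    (p₁' p₂' θ : ℝ) (f : Ω₁ × Ω₂ → ℝ) {E₁ : Set Ω₁} {E₂ : Set Ω₂}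
    (h₁ : MeasurableSet E₁) (h₂ : MeasurableSet E₂)
    (h₁0 : 0 < μ₁ E₁) (h₁f : μ₁ E₁ < ∞) (h₂f : μ₂ E₂ < ∞) :
    ∫⁻ z in E₁ ×ˢ E₂, ‖f z‖₊ ∂(μ₁.prod μ₂)
      ≤ Mfunc μ₁ μ₂ p₁' p₂' θ f * μ₁ E₁ ^ ((1-θ)/p₁') * μ₂ E₂ ^ (θ/p₂') := by
  rcases eq_or_lt_of_le (zero_le : 0 ≤ μ₂ E₂) with h₂0 | h₂0
  · have hnull : (μ₁.prod μ₂) (E₁ ×ˢ E₂) = 0 := by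
      rw [Measure.prod_prod, ← h₂0, mul_zero]
    rw [setLIntegral_measure_zero _ _ hnull]
    exact zero_le
  set I := ∫⁻ z in E₁ ×ˢ E₂, (‖f z‖₊ : ℝ≥0∞) ∂(μ₁.prod μ₂) with hI
  set u := μ₁ E₁ ^ ((1-θ)/p₁') with hu
  set v := μ₂ E₂ ^ (θ/p₂') with hv
  have hune : u ≠ 0 := by simp [hu, ENNReal.rpow_eq_zero_iff, h₁0.ne', h₁f.ne]
  have hunt : u ≠ ∞ := by simp [hu, ENNReal.rpow_eq_top_iff, h₁0.ne', h₁f.ne]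
  have hvne : v ≠ 0 := by simp [hv, ENNReal.rpow_eq_zero_iff, h₂0.ne', h₂f.ne]
  have hvnt : v ≠ ∞ := by simp [hv, ENNReal.rpow_eq_top_iff, h₂0.ne', h₂f.ne]
  have hterm : I * u⁻¹ * v⁻¹ ≤ Mfunc μ₁ μ₂ p₁' p₂' θ f := by
    have : I * μ₁ E₁ ^ (-(1 - θ) / p₁') * μ₂ E₂ ^ (-θ / p₂') ≤ Mfunc μ₁ μ₂ p₁' p₂' θ f := by
      rw [Mfunc]
      refine le_iSup_of_le E₁ (le_iSup_of_le E₂ (le_iSup_of_le h₁ (le_iSup_of_le h₂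
        (le_iSup_of_le h₁0 (le_iSup_of_le h₁f (le_iSup_of_le h₂0 (le_iSup_of_le h₂f le_rfl)))))))
    rw [neg_div, neg_div, ENNReal.rpow_neg, ENNReal.rpow_neg] at this
    exact this
  calc I = (I * u⁻¹ * v⁻¹) * u * v := by
        rw [mul_assoc, mul_assoc, mul_assoc]
        rw [show u⁻¹ * (v⁻¹ * (u * v)) = (u⁻¹ * u) * (v⁻¹ * v) by ring,
          ENNReal.inv_mul_cancel hune hunt, ENNReal.inv_mul_cancel hvne hvnt, one_mul, mul_one]
    _ ≤ Mfunc μ₁ μ₂ p₁' p₂' θ f * u * v :=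
        mul_le_mul_left (mul_le_mul_left hterm u) v

lemma lintegral_kernelOp_le (μ₁ : Measure Ω₁) (μ₂ : Measure Ω₂)
    [SigmaFinite μ₁] [SigmaFinite μ₂] (p₁' p₂' θ r : ℝ) (hrp : 1/r = θ/p₂')
    {f : Ω₁ × Ω₂ → ℝ} {g : Ω₂ → ℝ} (hf : Measurable f) (hg : Measurable g)
    (hFt : ∀ t : ℝ, 0 < t → μ₂ {y | t < |g y|} < ∞)
    {A : Set Ω₁} (hA : MeasurableSet A) (hA0 : 0 < μ₁ A) (hAfin : μ₁ A < ∞) :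
    ∫⁻ x in A, kernelOp μ₂ f g x ∂μ₁
      ≤ Mfunc μ₁ μ₂ p₁' p₂' θ f * μ₁ A ^ ((1-θ)/p₁') * lorentzNorm μ₂ r g := by
  set M := Mfunc μ₁ μ₂ p₁' p₂' θ f with hM
  set X := μ₁ A ^ ((1-θ)/p₁') with hX
  set ρ := (μ₁.restrict A).prod μ₂ with hρ
  have : IsFiniteMeasure (μ₁.restrict A) := ⟨by rwa [Measure.restrict_apply_univ]⟩
  have hFmeas : Measurable fun z : Ω₁ × Ω₂ => (‖f z‖₊ : ℝ≥0∞) := hf.nnnorm.coe_nnreal_ennreal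
  -- indicator set in (z, t)
  have hTmeas : MeasurableSet {p : (Ω₁ × Ω₂) × ℝ | p.2 < |g p.1.2|} :=
    measurableSet_lt measurable_snd ((hg.comp (measurable_snd.comp measurable_fst)).abs)
  have hjoint : Measurable fun p : (Ω₁ × Ω₂) × ℝ =>
      (‖f p.1‖₊ : ℝ≥0∞) * (if p.2 < |g p.1.2| then (1:ℝ≥0∞) else 0) :=
    (hFmeas.comp measurable_fst).mul (Measurable.ite hTmeas measurable_const measurable_const)
  -- step 1: rewrite as a product integral
  have step1 : ∫⁻ x in A, kernelOp μ₂ f g x ∂μ₁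
      = ∫⁻ z, (‖f z‖₊ : ℝ≥0∞) * (‖g z.2‖₊ : ℝ≥0∞) ∂ρ := by
    rw [hρ, lintegral_prod _ (by fun_prop)]
    rfl
  -- step 2: layer cake in g
  have habs : ∀ a : ℝ, ((‖a‖₊ : ℝ≥0∞))
      = ∫⁻ t in Ioi (0:ℝ), (if t < |a| then (1:ℝ≥0∞) else 0) := by
    intro a
    have hset : MeasurableSet {t : ℝ | t < |a|} := measurableSet_Iio
    have : ∫⁻ t in Ioi (0:ℝ), (if t < |a| then (1:ℝ≥0∞) else 0)
        = (volume.restrict (Ioi (0:ℝ))) (Iio |a|) := by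
      have := lintegral_ite_one (volume.restrict (Ioi (0:ℝ))) (S := Iio |a|) measurableSet_Iio
      simpa using this
    rw [this, Measure.restrict_apply measurableSet_Iio, Set.Iio_inter_Ioi,
      Real.volume_Ioo, sub_zero, ← Real.enorm_eq_ofReal_abs, enorm_eq_nnnorm]
  have step2 : ∫⁻ z, (‖f z‖₊ : ℝ≥0∞) * (‖g z.2‖₊ : ℝ≥0∞) ∂ρ
      = ∫⁻ z, (∫⁻ t in Ioi (0:ℝ), (‖f z‖₊ : ℝ≥0∞) * (if t < |g z.2| then (1:ℝ≥0∞) else 0)) ∂ρ := by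
    refine lintegral_congr fun z => ?_
    rw [habs (g z.2)]
    exact (lintegral_const_mul _
      (Measurable.ite (measurableSet_lt measurable_id measurable_const) measurable_const
        measurable_const)).symm
  -- step 3: swap
  have step3 : ∫⁻ z, (∫⁻ t in Ioi (0:ℝ), (‖f z‖₊ : ℝ≥0∞) * (if t < |g z.2| then (1:ℝ≥0∞) else 0)) ∂ρ
      = ∫⁻ t in Ioi (0:ℝ), (∫⁻ z, (‖f z‖₊ : ℝ≥0∞) * (if t < |g z.2| then (1:ℝ≥0∞) else 0) ∂ρ) :=
    lintegral_lintegral_swap hjoint.aemeasurable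
  -- step 4: identify the inner integral
  have step4 : ∀ t : ℝ, (∫⁻ z, (‖f z‖₊ : ℝ≥0∞) * (if t < |g z.2| then (1:ℝ≥0∞) else 0) ∂ρ)
      = ∫⁻ z in A ×ˢ {y | t < |g y|}, (‖f z‖₊ : ℝ≥0∞) ∂(μ₁.prod μ₂) := by
    intro t
    have hS : MeasurableSet {y : Ω₂ | t < |g y|} := measurableSet_lt measurable_const hg.abs
    have heq : (fun z : Ω₁ × Ω₂ => (‖f z‖₊ : ℝ≥0∞) * (if t < |g z.2| then (1:ℝ≥0∞) else 0))
        = (Set.univ ×ˢ {y | t < |g y|}).indicator fun z => (‖f z‖₊ : ℝ≥0∞) := by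
      ext z
      by_cases hz : t < |g z.2| <;> simp [Set.indicator_apply, Set.mem_prod, hz]
    have e1 : ((μ₁.restrict A).prod μ₂).restrict (Set.univ ×ˢ {y | t < |g y|})
        = (μ₁.prod μ₂).restrict (A ×ˢ {y | t < |g y|}) := by
      rw [← Measure.prod_restrict, Measure.restrict_univ, Measure.prod_restrict]
    rw [heq, lintegral_indicator (MeasurableSet.univ.prod hS), hρ, e1]
  -- step 5: conclude
  have hlormeas : Measurable fun t : ℝ => μ₂ {y | t < |g y|} ^ (1/r) := by
    have : Antitone fun t : ℝ => μ₂ {y | t < |g y|} :=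
      fun a b hab => measure_mono fun y hy => lt_of_le_of_lt hab hy
    exact (this.measurable).pow_const _
  calc ∫⁻ x in A, kernelOp μ₂ f g x ∂μ₁
      = ∫⁻ t in Ioi (0:ℝ), (∫⁻ z, (‖f z‖₊ : ℝ≥0∞) * (if t < |g z.2| then (1:ℝ≥0∞) else 0) ∂ρ) := by
        rw [step1, step2, step3]
    _ ≤ ∫⁻ t in Ioi (0:ℝ), (M * X) * μ₂ {y | t < |g y|} ^ (1/r) := by
        refine setLIntegral_mono (by fun_prop) fun t ht => ?_
        rw [step4 t]
        rcases eq_or_lt_of_le (zero_le : 0 ≤ μ₂ {y | t < |g y|}) with h20 | h20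
        · have hnull : (μ₁.prod μ₂) (A ×ˢ {y | t < |g y|}) = 0 := by
            rw [Measure.prod_prod, ← h20, mul_zero]
          rw [setLIntegral_measure_zero _ _ hnull]
          exact zero_le
        · have hS : MeasurableSet {y : Ω₂ | t < |g y|} := measurableSet_lt measurable_const hg.abs
          have := setLIntegral_le_Mfunc μ₁ μ₂ p₁' p₂' θ f hA hS hA0 hAfin (hFt t ht)
          rw [← hrp] at this
          rw [mul_assoc]
          rw [mul_assoc] at this
          exact this
    _ = (M * X) * lorentzNorm μ₂ r g := lintegral_const_mul _ hlormeas
    _ = M * X * lorentzNorm μ₂ r g := by ring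

lemma lorentzNorm_indicator (μ : Measure Ω₂) {E : Set Ω₂}
    (h0 : 0 < μ E) (hfin : μ E < ∞) {r : ℝ} (hr : 0 < 1/r) :
    lorentzNorm μ r (E.indicator fun _ => (μ E).toReal ^ (-(1/r))) = 1 := by
  set a : ℝ := (μ E).toReal ^ (-(1/r)) with haa
  have ha : 0 < a := Real.rpow_pos_of_pos (ENNReal.toReal_pos h0.ne' hfin.ne) _
  have key : ∀ c ∈ Ioi (0:ℝ), μ {y | c < |(E.indicator fun _ => a) y|} ^ (1/r)
      = (Iio a).indicator (fun _ => μ E ^ (1/r)) c := by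
    intro c hc
    by_cases hca : c < a
    · have hset : {y | c < |(E.indicator fun _ => a) y|} = E := by
        ext y
        by_cases hy : y ∈ E <;>
          simp [Set.indicator_apply, hy, abs_of_nonneg ha.le, hca, not_lt.mpr (le_of_lt (mem_Ioi.mp hc)), ha,
            (lt_irrefl (0:ℝ)), hc]
      rw [hset, Set.indicator_of_mem (by simpa using hca)]
    · have hset : {y | c < |(E.indicator fun _ => a) y|} = (∅ : Set Ω₂) := by
        ext y
        by_cases hy : y ∈ E <;>
          simp [Set.indicator_apply, hy, abs_of_nonneg ha.le, hca, not_lt.mpr (le_of_lt (mem_Ioi.mp hc))]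
      rw [hset, Set.indicator_of_notMem (by simpa using hca), measure_empty]
      exact ENNReal.zero_rpow_of_pos hr
  have hof : ENNReal.ofReal a = μ E ^ (-(1/r)) := by
    rw [haa, ← ENNReal.ofReal_rpow_of_pos (ENNReal.toReal_pos h0.ne' hfin.ne),
      ENNReal.ofReal_toReal hfin.ne]
  rw [lorentzNorm, setLIntegral_congr_fun measurableSet_Ioi key,
    lintegral_indicator measurableSet_Iio, setLIntegral_const,
    Measure.restrict_apply measurableSet_Iio, Set.Iio_inter_Ioi, Real.volume_Ioo, sub_zero,
    hof, ← ENNReal.rpow_add _ _ h0.ne' hfin.ne, add_neg_cancel, ENNReal.rpow_zero]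

lemma setLIntegral_kernelOp_indicator (μ₁ : Measure Ω₁) (μ₂ : Measure Ω₂)
    [SigmaFinite μ₁] [SigmaFinite μ₂] {f : Ω₁ × Ω₂ → ℝ} (hf : Measurable f)
    {E₁ : Set Ω₁} {E₂ : Set Ω₂} (hE₁ : MeasurableSet E₁) (hE₂ : MeasurableSet E₂)
    {a : ℝ} (ha : 0 ≤ a) :
    ∫⁻ x in E₁, kernelOp μ₂ f (E₂.indicator fun _ => a) x ∂μ₁
      = ENNReal.ofReal a * ∫⁻ z in E₁ ×ˢ E₂, (‖f z‖₊ : ℝ≥0∞) ∂(μ₁.prod μ₂) := by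
  have hFx : ∀ x : Ω₁, Measurable fun y => (‖f (x, y)‖₊ : ℝ≥0∞) := fun x =>
    ((hf.comp (measurable_prodMk_left)).nnnorm).coe_nnreal_ennreal
  have hker : ∀ x, kernelOp μ₂ f (E₂.indicator fun _ => a) x
      = ENNReal.ofReal a * ∫⁻ y in E₂, (‖f (x, y)‖₊ : ℝ≥0∞) ∂μ₂ := by
    intro x
    rw [kernelOp]
    have heq : (fun y => (‖f (x, y)‖₊ : ℝ≥0∞) * (‖(E₂.indicator fun _ => a) y‖₊ : ℝ≥0∞))
        = E₂.indicator fun y => ENNReal.ofReal a * (‖f (x, y)‖₊ : ℝ≥0∞) := by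
      ext y
      by_cases hy : y ∈ E₂ <;>
        simp [Set.indicator_apply, hy, ← enorm_eq_nnnorm, Real.enorm_eq_ofReal ha, mul_comm]
    rw [heq, lintegral_indicator hE₂, lintegral_const_mul _ (hFx x)]
  rw [setLIntegral_congr_fun hE₁ (fun x _ => hker x),
    lintegral_const_mul _ (Measurable.lintegral_prod_right'
      ((hf.nnnorm.coe_nnreal_ennreal)))]
  congr 1
  rw [← Measure.prod_restrict, lintegral_prod _ (hf.nnnorm.coe_nnreal_ennreal).aemeasurable]

end AuxLemmas

/-- Operator form of the interpolation condition (case `q = 1`): the quantity `M(f)` and the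
norm of `T_{|f|} : L_{r,1}(μ₂) → L_{s,∞}(μ₁)` are equivalent up to constants depending only on
`p₁, p₂, θ`; in particular `M(f) < ∞` iff `T_{|f|}` is bounded from `L_{r,1}(μ₂)` to
`L_{s,∞}(μ₁)`. -/
theorem operator_form_interpolation
    {Ω₁ Ω₂ : Type*} [MeasurableSpace Ω₁] [MeasurableSpace Ω₂]
    (μ₁ : Measure Ω₁) (μ₂ : Measure Ω₂) [SigmaFinite μ₁] [SigmaFinite μ₂]
    (p₁ p₂ p₁' p₂' θ r s : ℝ) (hp₁ : 1 < p₁) (hp₂ : 1 < p₂)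
    (hp₁' : p₁' = p₁ / (p₁ - 1)) (hp₂' : p₂' = p₂ / (p₂ - 1))
    (hθ : 0 < θ) (hθ1 : θ < 1)
    (hr : 1 / r = θ / p₂') (hs : 1 - 1 / s = (1 - θ) / p₁') :
    ∃ c C : ℝ≥0, 0 < c ∧ 0 < C ∧
      ∀ f : Ω₁ × Ω₂ → ℝ, Measurable f →
        ((c : ℝ≥0∞) * Mfunc μ₁ μ₂ p₁' p₂' θ f
            ≤ ⨆ (g : Ω₂ → ℝ) (_ : Measurable g) (_ : lorentzNorm μ₂ r g ≤ 1),
                weakNormE μ₁ s (kernelOp μ₂ f g)) ∧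
        ((⨆ (g : Ω₂ → ℝ) (_ : Measurable g) (_ : lorentzNorm μ₂ r g ≤ 1),
              weakNormE μ₁ s (kernelOp μ₂ f g))
            ≤ (C : ℝ≥0∞) * Mfunc μ₁ μ₂ p₁' p₂' θ f) ∧
        (Mfunc μ₁ μ₂ p₁' p₂' θ f < ∞ ↔
          ∃ C' : ℝ≥0, ∀ g : Ω₂ → ℝ, Measurable g →
            weakNormE μ₁ s (kernelOp μ₂ f g) ≤ (C' : ℝ≥0∞) * lorentzNorm μ₂ r g) := by
  -- basic real-number facts
  have hp₁pos : (0:ℝ) < p₁ - 1 := by linarith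
  have hp₁'1 : 1 < p₁' := by rw [hp₁', lt_div_iff₀ hp₁pos]; linarith
  have hp₂pos : (0:ℝ) < p₂ - 1 := by linarith
  have hp₂'1 : 1 < p₂' := by rw [hp₂', lt_div_iff₀ hp₂pos]; linarith
  have hx1 : 0 < (1-θ)/p₁' := div_pos (by linarith) (by linarith)
  have hx2 : (1-θ)/p₁' < 1 := (div_lt_one (by linarith)).mpr (by linarith)
  have hs_inv : 1/s = 1 - (1-θ)/p₁' := by linarith [hs]
  have hs_inv_pos : 0 < 1/s := by rw [hs_inv]; linarith
  have hs0 : 0 < s := one_div_pos.mp hs_inv_pos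
  have hs_gt : 1 < s := (div_lt_one hs0).mp (by rw [hs_inv]; linarith)
  have hr_pos : 0 < 1/r := by rw [hr]; exact div_pos hθ (by linarith)
  set cn : ℝ≥0 := Real.toNNReal ((s-1)/s) with hcn
  have hcpos : 0 < cn := Real.toNNReal_pos.mpr (div_pos (by linarith) hs0)
  refine ⟨cn, 1, hcpos, one_pos, fun f hf => ?_⟩
  set M := Mfunc μ₁ μ₂ p₁' p₂' θ f with hMdef
  set S := ⨆ (g : Ω₂ → ℝ) (_ : Measurable g) (_ : lorentzNorm μ₂ r g ≤ 1),
      weakNormE μ₁ s (kernelOp μ₂ f g) with hSdef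
  -- the main upper bound: the weak norm is controlled by M * (Lorentz norm)
  have hdir2 : ∀ g : Ω₂ → ℝ, Measurable g → lorentzNorm μ₂ r g < ∞ →
      weakNormE μ₁ s (kernelOp μ₂ f g) ≤ M * lorentzNorm μ₂ r g := by
    intro g hg hL
    refine weakNormE_le μ₁ (kernelOp_measurable hf hg) hs0 ?_
    intro A hA hA0 hAfin cc hcc hsub
    have hcheb : (cc : ℝ≥0∞) * μ₁ A ≤ ∫⁻ x in A, kernelOp μ₂ f g x ∂μ₁ := by
      calc (cc:ℝ≥0∞) * μ₁ A = ∫⁻ _ in A, (cc:ℝ≥0∞) ∂μ₁ := by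
            rw [setLIntegral_const, mul_comm]
        _ ≤ ∫⁻ x in A, kernelOp μ₂ f g x ∂μ₁ :=
            setLIntegral_mono (kernelOp_measurable hf hg) fun x hx => (hsub x hx).le
    calc (cc:ℝ≥0∞) * μ₁ A ≤ ∫⁻ x in A, kernelOp μ₂ f g x ∂μ₁ := hcheb
      _ ≤ M * μ₁ A ^ ((1-θ)/p₁') * lorentzNorm μ₂ r g :=
          lintegral_kernelOp_le μ₁ μ₂ p₁' p₂' θ r hr hf hg
            (meas_lt_top_of_lorentz hr_pos hL) hA hA0 hAfin
      _ = (M * lorentzNorm μ₂ r g) * μ₁ A ^ (1 - 1/s) := by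
          rw [← hs]; ring
  -- direction 1 : cn * M ≤ S
  have hpart1 : (cn:ℝ≥0∞) * M ≤ S := by
    have key1 : ∀ (E₁ : Set Ω₁) (E₂ : Set Ω₂), MeasurableSet E₁ → MeasurableSet E₂ →
        0 < μ₁ E₁ → μ₁ E₁ < ∞ → 0 < μ₂ E₂ → μ₂ E₂ < ∞ →
        (∫⁻ x in E₁ ×ˢ E₂, (‖f x‖₊ : ℝ≥0∞) ∂(μ₁.prod μ₂)) *
          μ₁ E₁ ^ (-(1 - θ) / p₁') * μ₂ E₂ ^ (-θ / p₂')
          ≤ ENNReal.ofReal (s/(s-1)) * S := by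
      intro E₁ E₂ h₁ h₂ h₁0 h₁f h₂0 h₂f
      set a : ℝ := (μ₂ E₂).toReal ^ (-(1/r)) with haa
      have ha : 0 < a := Real.rpow_pos_of_pos (ENNReal.toReal_pos h₂0.ne' h₂f.ne) _
      set g : Ω₂ → ℝ := E₂.indicator fun _ => a with hgdef
      have hg : Measurable g := measurable_const.indicator h₂
      have hLor : lorentzNorm μ₂ r g = 1 := lorentzNorm_indicator μ₂ h₂0 h₂f hr_pos
      have hWle : weakNormE μ₁ s (kernelOp μ₂ f g) ≤ S := by
        rw [hSdef]
        exact le_iSup_of_le g (le_iSup_of_le hg (le_iSup_of_le (le_of_eq hLor) le_rfl))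
      have hkey := lintegral_le_weakNormE μ₁ (kernelOp_measurable (μ₂ := μ₂) hf hg) hs_gt h₁ h₁f
      have hketa : ∫⁻ x in E₁, kernelOp μ₂ f g x ∂μ₁
          = ENNReal.ofReal a * ∫⁻ z in E₁ ×ˢ E₂, (‖f z‖₊ : ℝ≥0∞) ∂(μ₁.prod μ₂) :=
        setLIntegral_kernelOp_indicator μ₁ μ₂ hf h₁ h₂ ha.le
      set I := ∫⁻ z in E₁ ×ˢ E₂, (‖f z‖₊ : ℝ≥0∞) ∂(μ₁.prod μ₂) with hII
      set u := μ₁ E₁ ^ ((1-θ)/p₁') with huu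
      have hune : u ≠ 0 := by simp [huu, ENNReal.rpow_eq_zero_iff, h₁0.ne', h₁f.ne]
      have hunt : u ≠ ∞ := by simp [huu, ENNReal.rpow_eq_top_iff, h₁0.ne', h₁f.ne]
      have hof : ENNReal.ofReal a = μ₂ E₂ ^ (-(1/r)) := by
        rw [haa, ← ENNReal.ofReal_rpow_of_pos (ENNReal.toReal_pos h₂0.ne' h₂f.ne),
          ENNReal.ofReal_toReal h₂f.ne]
      have hmain : ENNReal.ofReal a * I
          ≤ ENNReal.ofReal (s/(s-1)) * S * u := by
        calc ENNReal.ofReal a * I = ∫⁻ x in E₁, kernelOp μ₂ f g x ∂μ₁ := hketa.symm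
          _ ≤ ENNReal.ofReal (s/(s-1)) * weakNormE μ₁ s (kernelOp μ₂ f g)
              * μ₁ E₁ ^ (1 - 1/s) := hkey
          _ ≤ ENNReal.ofReal (s/(s-1)) * S * μ₁ E₁ ^ (1 - 1/s) :=
              mul_le_mul_left (mul_le_mul_right hWle _) _
          _ = ENNReal.ofReal (s/(s-1)) * S * u := by rw [huu, ← hs, hs_inv, ← hs]
      have hterm : I * μ₁ E₁ ^ (-(1 - θ) / p₁') * μ₂ E₂ ^ (-θ / p₂')
          = (ENNReal.ofReal a * I) * u⁻¹ := by
        rw [hof, neg_div, neg_div, ENNReal.rpow_neg (μ₁ E₁), ← huu]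
        rw [show -(θ/p₂') = -(1/r) by rw [hr]]
        ring
      rw [hterm]
      calc (ENNReal.ofReal a * I) * u⁻¹ ≤ (ENNReal.ofReal (s/(s-1)) * S * u) * u⁻¹ :=
            mul_le_mul_left hmain _
        _ = ENNReal.ofReal (s/(s-1)) * S * (u * u⁻¹) := by ring
        _ = ENNReal.ofReal (s/(s-1)) * S := by
            rw [ENNReal.mul_inv_cancel hune hunt, mul_one]
    have hcK : (cn:ℝ≥0∞) * ENNReal.ofReal (s/(s-1)) = 1 := by
      have : (cn:ℝ≥0∞) = ENNReal.ofReal ((s-1)/s) := rfl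
      rw [this, ← ENNReal.ofReal_mul (by apply div_nonneg <;> linarith),
        show ((s-1)/s * (s/(s-1)) : ℝ) = 1 by
          rw [div_mul_div_comm, mul_comm (s-1) s,
            div_self (mul_pos hs0 (by linarith : (0:ℝ) < s - 1)).ne'],
        ENNReal.ofReal_one]
    rw [hMdef, Mfunc]
    simp only [ENNReal.mul_iSup]
    refine iSup_le fun E₁ => iSup_le fun E₂ => iSup_le fun h₁ => iSup_le fun h₂ =>
      iSup_le fun h₁0 => iSup_le fun h₁f => iSup_le fun h₂0 => iSup_le fun h₂f => ?_
    calc (cn:ℝ≥0∞) * ((∫⁻ x in E₁ ×ˢ E₂, (‖f x‖₊:ℝ≥0∞) ∂(μ₁.prod μ₂)) *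
            μ₁ E₁ ^ (-(1 - θ) / p₁') * μ₂ E₂ ^ (-θ / p₂'))
        ≤ (cn:ℝ≥0∞) * (ENNReal.ofReal (s/(s-1)) * S) :=
          mul_le_mul_right (key1 E₁ E₂ h₁ h₂ h₁0 h₁f h₂0 h₂f) _
      _ = ((cn:ℝ≥0∞) * ENNReal.ofReal (s/(s-1))) * S := by ring
      _ = S := by rw [hcK, one_mul]
  have hpart2 : S ≤ (1:ℝ≥0∞) * M := by
    rw [one_mul, hSdef]
    refine iSup_le fun g => iSup_le fun hg => iSup_le fun hnorm => ?_
    calc weakNormE μ₁ s (kernelOp μ₂ f g) ≤ M * lorentzNorm μ₂ r g :=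
          hdir2 g hg (lt_of_le_of_lt hnorm ENNReal.one_lt_top)
      _ ≤ M * 1 := mul_le_mul_right hnorm M
      _ = M := mul_one M
  refine ⟨hpart1, by simpa using hpart2, ?_, ?_⟩
  · intro hMfin
    refine ⟨M.toNNReal + 1, fun g hg => ?_⟩
    rcases eq_or_ne (lorentzNorm μ₂ r g) ∞ with hL | hL
    · rw [hL, ENNReal.mul_top (by simp)]
      exact le_top
    · calc weakNormE μ₁ s (kernelOp μ₂ f g) ≤ M * lorentzNorm μ₂ r g :=
            hdir2 g hg (lt_top_iff_ne_top.mpr hL)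
        _ ≤ ((M.toNNReal + 1 : ℝ≥0) : ℝ≥0∞) * lorentzNorm μ₂ r g := by
            refine mul_le_mul_left ?_ _
            rw [ENNReal.coe_add, ENNReal.coe_toNNReal hMfin.ne]
            exact le_self_add
  · rintro ⟨C', hC'⟩
    have hSle : S ≤ (C' : ℝ≥0∞) := by
      rw [hSdef]
      refine iSup_le fun g => iSup_le fun hg => iSup_le fun hnorm => ?_
      calc weakNormE μ₁ s (kernelOp μ₂ f g) ≤ (C' : ℝ≥0∞) * lorentzNorm μ₂ r g := hC' g hg
        _ ≤ (C' : ℝ≥0∞) * 1 := mul_le_mul_right hnorm _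
        _ = (C' : ℝ≥0∞) := mul_one _
    by_contra hM
    have hMtop : M = ∞ := by
      simpa [lt_top_iff_ne_top] using hM
    have : (∞:ℝ≥0∞) ≤ (C' : ℝ≥0∞) := by
      calc (∞:ℝ≥0∞) = (cn:ℝ≥0∞) * M := by
            rw [hMtop, ENNReal.mul_top (by exact_mod_cast hcpos.ne')]
        _ ≤ S := hpart1
        _ ≤ (C' : ℝ≥0∞) := hSle
    exact absurd (top_le_iff.mp this) (by simp)
end

section
/- (Operator norm identity II.) Let 1 < p₂ < ∞ with p₂' = p₂/(p₂−1) and let f : Ω₁ × Ω₂ → ℝ be measurable. Then the operator norm of the positive kernel operator T_{|f|}g(x) := ∫ |f(x,y)| g(y) dμ₂(y) from the Lorentz space L_{p₂',1}(μ₂), with norm [g]_{p₂',1} := ∫₀^∞ μ₂({|g| > c})^{1/p₂'} dc, to L_1(μ₁) equals ‖f‖_{L_{p₂,∞}(μ₂;L_1(μ₁))} := sup over measurable E ⊆ Ω₂ with 0 < μ₂(E) < ∞ of μ₂(E)^{−1/p₂'} ∫_E (∫ |f(x,y)| dμ₁(x)) dμ₂(y). That is, sup{ ∫ |T_{|f|}g|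 dμ₁ : [g]_{p₂',1} ≤ 1 } = ‖f‖_{L_{p₂,∞}(μ₂;L_1(μ₁))}. -/
open MeasureTheory ENNReal NNReal

/-- Operator norm identity II: the norm of the positive kernel operator
`T_{|f|} : L_{p₂',1}(μ₂) → L_1(μ₁)`, where `L_{p₂',1}(μ₂)` carries the Lorentz norm
`[g]_{p₂',1} = ∫₀^∞ μ₂({|g| > c})^{1/p₂'} dc`, equals
`‖f‖_{L_{p₂,∞}(μ₂;L_1(μ₁))} = sup_E μ₂(E)^{-1/p₂'} ∫_E (∫ |f(x,y)| dμ₁) dμ₂`. -/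
theorem operator_norm_identity_II
    {Ω₁ Ω₂ : Type*} [MeasurableSpace Ω₁] [MeasurableSpace Ω₂]
    (μ₁ : Measure Ω₁) (μ₂ : Measure Ω₂) [SigmaFinite μ₁] [SigmaFinite μ₂]
    (p₂ p₂' : ℝ) (hp₂ : 1 < p₂) (hp₂' : p₂' = p₂ / (p₂ - 1))
    (f : Ω₁ × Ω₂ → ℝ) (hf : Measurable f) :
    (⨆ (g : Ω₂ → ℝ) (_ : Measurable g)
        (_ : (∫⁻ c in Set.Ioi (0 : ℝ), μ₂ {y | c < |g y|} ^ (1 / p₂')) ≤ 1),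
      ∫⁻ x, (∫⁻ y, (‖f (x, y)‖₊ : ℝ≥0∞) * ‖g y‖₊ ∂μ₂) ∂μ₁)
    = ⨆ (E : Set Ω₂) (_ : MeasurableSet E) (_ : 0 < μ₂ E) (_ : μ₂ E < ∞),
        μ₂ E ^ (-(1 / p₂')) *
          ∫⁻ y in E, (∫⁻ x, (‖f (x, y)‖₊ : ℝ≥0∞) ∂μ₁) ∂μ₂ := by
  have hp21 : 0 < p₂ - 1 := by linarith
  have hp'pos : 0 < p₂' := by rw [hp₂']; positivity
  have hrpos : 0 < 1 / p₂' := by positivity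
  set r : ℝ := 1 / p₂' with hr
  set F : Ω₂ → ℝ≥0∞ := fun y => ∫⁻ x, (‖f (x, y)‖₊ : ℝ≥0∞) ∂μ₁ with hFdef
  have hFmeas : Measurable F := Measurable.lintegral_prod_left hf.enorm
  -- Tonelli step
  have hA : ∀ g : Ω₂ → ℝ, Measurable g →
      (∫⁻ x, ∫⁻ y, (‖f (x, y)‖₊ : ℝ≥0∞) * ‖g y‖₊ ∂μ₂ ∂μ₁)
        = ∫⁻ y, F y * ‖g y‖₊ ∂μ₂ := by
    intro g hg
    rw [lintegral_lintegral_swap]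
    · refine lintegral_congr fun y => ?_
      exact lintegral_mul_const _ (hf.comp measurable_prodMk_right).enorm
    · exact (hf.enorm.mul (hg.enorm.comp measurable_snd)).aemeasurable
  -- layer cake step
  have hB : ∀ g : Ω₂ → ℝ, Measurable g →
      (∫⁻ y, F y * ‖g y‖₊ ∂μ₂)
        = ∫⁻ c in Set.Ioi (0 : ℝ), ∫⁻ y in {y | c < |g y|}, F y ∂μ₂ := by
    intro g hg
    have h1 : ∫⁻ y, F y * ‖g y‖₊ ∂μ₂
        = ∫⁻ y, (‖g y‖₊ : ℝ≥0∞) ∂(μ₂.withDensity F) := by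
      rw [lintegral_withDensity_eq_lintegral_mul _ hFmeas (show Measurable fun y => (‖g y‖₊ : ℝ≥0∞) from hg.enorm)]; rfl
    have h2 : ∀ y, ((‖g y‖₊ : ℝ≥0∞)) = ENNReal.ofReal |g y| := by
      intro y; rw [← Real.enorm_eq_ofReal_abs]; rfl
    rw [h1]
    simp_rw [h2]
    rw [lintegral_eq_lintegral_meas_lt _ (ae_of_all _ fun y => abs_nonneg _)
      hg.abs.aemeasurable]
    refine lintegral_congr fun c => ?_
    rw [withDensity_apply _ (measurableSet_lt measurable_const hg.abs)]
  set R := ⨆ (E : Set Ω₂) (_ : MeasurableSet E) (_ : 0 < μ₂ E) (_ : μ₂ E < ∞),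
      μ₂ E ^ (-r) * ∫⁻ y in E, F y ∂μ₂ with hR
  apply le_antisymm
  · -- LHS ≤ RHS
    refine iSup_le fun g => iSup_le fun hg => iSup_le fun hgnorm => ?_
    rw [hA g hg, hB g hg]
    have hfin : ∀ c : ℝ, 0 < c → μ₂ {y | c < |g y|} ≠ ∞ := by
      intro c hc hinf
      have hmono : ∀ c' ∈ Set.Ioc (0 : ℝ) c, (∞ : ℝ≥0∞) = μ₂ {y | c' < |g y|} ^ r := by
        intro c' hc'
        have hsub : {y | c < |g y|} ⊆ {y | c' < |g y|} :=
          fun y hy => lt_of_le_of_lt hc'.2 hy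
        have htop : μ₂ {y | c' < |g y|} = ∞ :=
          top_le_iff.mp (hinf ▸ measure_mono hsub)
        rw [htop, ENNReal.top_rpow_of_pos hrpos]
      have hbig : (∞ : ℝ≥0∞) ≤ ∫⁻ c' in Set.Ioi (0 : ℝ), μ₂ {y | c' < |g y|} ^ r := by
        calc (∞ : ℝ≥0∞) = ∫⁻ _ in Set.Ioc (0 : ℝ) c, (∞ : ℝ≥0∞) := by
              rw [setLIntegral_const, Real.volume_Ioc,
                ENNReal.top_mul (by simp [ENNReal.ofReal_eq_zero]; linarith)]
          _ = ∫⁻ c' in Set.Ioc (0 : ℝ) c, μ₂ {y | c' < |g y|} ^ r :=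
              setLIntegral_congr_fun measurableSet_Ioc hmono
          _ ≤ ∫⁻ c' in Set.Ioi (0 : ℝ), μ₂ {y | c' < |g y|} ^ r :=
              lintegral_mono' (Measure.restrict_mono Set.Ioc_subset_Ioi_self le_rfl) le_rfl
      have : (∞ : ℝ≥0∞) ≤ 1 := hbig.trans hgnorm
      simp at this
    have hbound : ∀ c ∈ Set.Ioi (0 : ℝ),
        (∫⁻ y in {y | c < |g y|}, F y ∂μ₂) ≤ R * μ₂ {y | c < |g y|} ^ r := by
      intro c hc
      set E := {y | c < |g y|} with hE
      have hEm : MeasurableSet E := measurableSet_lt measurable_const hg.abs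
      rcases eq_or_ne (μ₂ E) 0 with h0 | h0
      · rw [setLIntegral_measure_zero _ _ h0]; exact zero_le
      · have hpos : 0 < μ₂ E := pos_iff_ne_zero.mpr h0
        have hlt : μ₂ E < ∞ := lt_top_iff_ne_top.mpr (hfin c hc)
        have hle : μ₂ E ^ (-r) * ∫⁻ y in E, F y ∂μ₂ ≤ R := by
          rw [hR]
          exact le_iSup_of_le E (le_iSup_of_le hEm (le_iSup_of_le hpos
            (le_iSup_of_le hlt le_rfl)))
        have hcancel : μ₂ E ^ r * μ₂ E ^ (-r) = 1 := by
          rw [← ENNReal.rpow_add _ _ h0 hlt.ne, add_neg_cancel, ENNReal.rpow_zero]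
        calc (∫⁻ y in E, F y ∂μ₂)
            = μ₂ E ^ r * (μ₂ E ^ (-r) * ∫⁻ y in E, F y ∂μ₂) := by
              rw [← mul_assoc, hcancel, one_mul]
          _ ≤ μ₂ E ^ r * R := mul_le_mul_right hle _
          _ = R * μ₂ E ^ r := mul_comm _ _
    have hmeas_t : Measurable fun c : ℝ => μ₂ {y | c < |g y|} ^ r := by
      have hanti : Antitone fun c : ℝ => μ₂ {y | c < |g y|} := by
        intro a b hab
        exact measure_mono fun y hy => lt_of_le_of_lt hab hy
      exact (hanti.measurable).pow_const r
    calc (∫⁻ c in Set.Ioi (0 : ℝ), ∫⁻ y in {y | c < |g y|}, F y ∂μ₂)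
        ≤ ∫⁻ c in Set.Ioi (0 : ℝ), R * μ₂ {y | c < |g y|} ^ r := by
          refine lintegral_mono_ae ?_
          filter_upwards [ae_restrict_mem measurableSet_Ioi] with c hc
          exact hbound c hc
      _ = R * ∫⁻ c in Set.Ioi (0 : ℝ), μ₂ {y | c < |g y|} ^ r :=
          lintegral_const_mul _ hmeas_t
      _ ≤ R * 1 := mul_le_mul_right hgnorm R
      _ = R := mul_one R
  · -- RHS ≤ LHS
    refine iSup_le fun E => iSup_le fun hEm => iSup_le fun hE0 => iSup_le fun hEfin => ?_
    set b : ℝ := (μ₂ E ^ r).toReal with hb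
    have hMpos : 0 < μ₂ E ^ r := ENNReal.rpow_pos hE0 hEfin.ne
    have hMne : μ₂ E ^ r ≠ ∞ := (ENNReal.rpow_lt_top_of_nonneg hrpos.le hEfin.ne).ne
    have hbpos : 0 < b := ENNReal.toReal_pos hMpos.ne' hMne
    set g : Ω₂ → ℝ := E.indicator fun _ => b⁻¹ with hgdef
    have hg : Measurable g := measurable_const.indicator hEm
    have hofReal : ENNReal.ofReal b⁻¹ = (μ₂ E ^ r)⁻¹ := by
      rw [hb, ← ENNReal.toReal_inv, ENNReal.ofReal_toReal (by simp [hMpos.ne'])]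
    have hnorm : (∫⁻ c in Set.Ioi (0 : ℝ), μ₂ {y | c < |g y|} ^ r) ≤ 1 := by
      have heq : ∀ c ∈ Set.Ioi (0 : ℝ), μ₂ {y | c < |g y|} ^ r
          = Set.indicator (Set.Ioo (0 : ℝ) b⁻¹) (fun _ => μ₂ E ^ r) c := by
        intro c hc
        rcases lt_or_ge c b⁻¹ with h | h
        · have hset : {y | c < |g y|} = E := by
            ext y; by_cases hy : y ∈ E
            · simp [hgdef, hy, abs_of_pos (inv_pos.mpr hbpos), h]
            · simp [hgdef, hy, not_lt.mpr (le_of_lt (Set.mem_Ioi.mp hc))]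
          rw [hset, Set.indicator_of_mem (Set.mem_Ioo.mpr ⟨hc, h⟩)]
        · have hset : {y | c < |g y|} = ∅ := by
            ext y; by_cases hy : y ∈ E
            · simp [hgdef, hy, abs_of_pos (inv_pos.mpr hbpos), not_lt.mpr h]
            · simp [hgdef, hy, not_lt.mpr (le_of_lt (Set.mem_Ioi.mp hc))]
          rw [hset, Set.indicator_of_notMem (fun hmem => absurd hmem.2 (not_lt.mpr h)),
            measure_empty, ENNReal.zero_rpow_of_pos hrpos]
      rw [setLIntegral_congr_fun measurableSet_Ioi heq,
        lintegral_indicator measurableSet_Ioo _,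
        Measure.restrict_restrict measurableSet_Ioo,
        Set.inter_eq_self_of_subset_left Set.Ioo_subset_Ioi_self,
        setLIntegral_const, Real.volume_Ioo, sub_zero, hofReal,
        ENNReal.mul_inv_cancel hMpos.ne' hMne]
    refine le_trans (le_of_eq ?_) (le_iSup_of_le g (le_iSup_of_le hg
      (le_iSup_of_le hnorm le_rfl)))
    rw [hA g hg]
    have hind : ∀ y, F y * (‖g y‖₊ : ℝ≥0∞)
        = E.indicator (fun y => F y * ENNReal.ofReal b⁻¹) y := by
      intro y
      by_cases hy : y ∈ E
      · rw [Set.indicator_of_mem hy]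
        congr 1
        rw [hgdef]
        simp only [Set.indicator_of_mem hy]
        rw [← enorm_eq_nnnorm, Real.enorm_eq_ofReal_abs,
          abs_of_pos (inv_pos.mpr hbpos)]
      · simp [hgdef, hy]
    rw [show (∫⁻ y, F y * ‖g y‖₊ ∂μ₂)
        = ∫⁻ y, E.indicator (fun y => F y * ENNReal.ofReal b⁻¹) y ∂μ₂ from
      lintegral_congr hind]
    rw [lintegral_indicator hEm _,
      lintegral_mul_const _ hFmeas,
      hofReal, ← ENNReal.rpow_neg, mul_comm]
end

section
/- (Conditional expectation version, converse with constant 2.) Suppose x : Ω → ℝ is integrable and for every pair of sets E₁, E₂ ⊆ Ω with Eⱼ measurable with respect to ℬⱼ one has ∫_{E₁∩E₂} |x| dμ ≤ μ(E₁) + μ(E₂). Then there exist integrable x₁, x₂ with x = x₁ + x₂ μ-almost everywhere and ‖x₁‖_{C₁} + ‖x₂‖_{C₂} ≤ 2. -/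
open MeasureTheory ENNReal NNReal

/-- The norm `‖x‖_C = ess sup 𝔼_ℬ(|x|)` associated to a sub-σ-algebra `m`. -/
noncomputable def condLinftyNorm {Ω : Type*} [m0 : MeasurableSpace Ω] (μ : Measure Ω)
    (m : MeasurableSpace Ω) (x : Ω → ℝ) : ℝ≥0∞ :=
  essSup (fun ω => ENNReal.ofReal ((μ[fun ω' => |x ω'| | m]) ω)) μ

open Set

/-- a.e. bound on conditional expectation from set-average bounds. -/
lemma varop_condexp_ae_le' {Ω : Type*} {m : MeasurableSpace Ω} [m0 : MeasurableSpace Ω]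
    {μ : Measure Ω} [IsProbabilityMeasure μ] (hm : m ≤ m0) {y : Ω → ℝ}
    (hy : Integrable y μ) (c : ℝ)
    (havg : ∀ E : Set Ω, MeasurableSet[m] E → 0 < μ E → ∫ ω in E, y ω ∂μ ≤ c * (μ E).toReal) :
    μ[y|m] ≤ᵐ[μ] fun _ => c := by
  haveI : SigmaFinite (μ.trim hm) := by
    have : IsFiniteMeasure (μ.trim hm) := isFiniteMeasure_trim hm
    infer_instance
  set g : Ω → ℝ := μ[y|m] with hg
  have hgm : StronglyMeasurable[m] g := stronglyMeasurable_condExp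
  have hnull : ∀ n : ℕ, μ {ω | c + (n+1:ℝ)⁻¹ ≤ g ω} = 0 := by
    intro n
    set E : Set Ω := {ω | c + (n+1:ℝ)⁻¹ ≤ g ω} with hE
    have hEm : MeasurableSet[m] E := by
      have : E = {ω | c + (n+1:ℝ)⁻¹ ≤ g ω} := rfl
      rw [this]
      exact measurableSet_le measurable_const hgm.measurable
    by_contra hpos
    have hμE : 0 < μ E := by
      rcases eq_or_lt_of_le (zero_le : (0:ℝ≥0∞) ≤ μ E) with h | h
      · exact absurd h.symm hpos
      · exact h
    have hEt : 0 < (μ E).toReal := ENNReal.toReal_pos hμE.ne' (measure_ne_top μ _)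
    have h1 : ∫ ω in E, g ω ∂μ = ∫ ω in E, y ω ∂μ := setIntegral_condExp hm hy hEm
    have h2 : (c + (n+1:ℝ)⁻¹) * (μ E).toReal ≤ ∫ ω in E, g ω ∂μ := by
      have := setIntegral_mono_on (integrableOn_const (C := c + (n+1:ℝ)⁻¹)
          ((measure_mono (Set.subset_univ E)).trans_lt (measure_lt_top μ _)).ne)
        (integrable_condExp.integrableOn) (hm _ hEm) (fun ω hω => hω)
      rw [setIntegral_const, smul_eq_mul] at this
      rw [mul_comm]
      exact this
    have h3 := havg E hEm hμE
    have hn : (0:ℝ) < (n+1:ℝ)⁻¹ := by positivity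
    nlinarith
  have hsub : {ω | ¬ g ω ≤ c} ⊆ ⋃ n : ℕ, {ω | c + (n+1:ℝ)⁻¹ ≤ g ω} := by
    intro ω hω
    simp only [Set.mem_setOf_eq, not_le] at hω
    obtain ⟨n, hn⟩ := exists_nat_one_div_lt (by linarith : 0 < g ω - c)
    refine Set.mem_iUnion.2 ⟨n, ?_⟩
    simp only [Set.mem_setOf_eq]
    rw [one_div] at hn
    linarith
  refine (ae_iff).2 (measure_mono_null hsub ?_)
  exact measure_iUnion_null fun n => hnull n

section Varop

variable {Ω : Type*} {m₁ m₂ : MeasurableSpace Ω} [m0 : MeasurableSpace Ω]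
  {μ : Measure Ω} [IsProbabilityMeasure μ] {x : Ω → ℝ}

lemma varop_layercake (hm₁ : m₁ ≤ m0) (hm₂ : m₂ ≤ m0) (hxm : Measurable[m0] x)
    (hbound : ∀ E₁ E₂ : Set Ω, MeasurableSet[m₁] E₁ → MeasurableSet[m₂] E₂ →
      ∫⁻ ω in E₁ ∩ E₂, ‖x ω‖₊ ∂μ ≤ μ E₁ + μ E₂)
    {w₁ w₂ : Ω → ℝ} (hw₁ : Measurable[m₁] w₁) (hw₂ : Measurable[m₂] w₂)
    (hw₁0 : ∀ ω, 0 ≤ w₁ ω) (hw₂0 : ∀ ω, 0 ≤ w₂ ω)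
    (hi₁ : ∫⁻ ω, ENNReal.ofReal (w₁ ω) ∂μ ≤ 1) (hi₂ : ∫⁻ ω, ENNReal.ofReal (w₂ ω) ∂μ ≤ 1) :
    ∫⁻ ω, (‖x ω‖₊ : ℝ≥0∞) * ENNReal.ofReal (min (w₁ ω) (w₂ ω)) ∂μ ≤ 2 := by
  have hw₁m : Measurable[m0] w₁ := hw₁.mono hm₁ le_rfl
  have hw₂m : Measurable[m0] w₂ := hw₂.mono hm₂ le_rfl
  set F : Ω → ℝ≥0∞ := fun ω => (‖x ω‖₊ : ℝ≥0∞) with hF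
  have hFm : Measurable[m0] F := hxm.enorm
  set G : Ω × ℝ → ℝ≥0∞ :=
    fun p => ({q : Ω × ℝ | q.2 < w₁ q.1 ∧ q.2 < w₂ q.1}).indicator (fun q => F q.1) p with hG
  have hSmeas : MeasurableSet[m0.prod (borel ℝ)] {q : Ω × ℝ | q.2 < w₁ q.1 ∧ q.2 < w₂ q.1} := by
    borelize ℝ
    exact (measurableSet_lt measurable_snd (hw₁m.comp measurable_fst)).inter
      (measurableSet_lt measurable_snd (hw₂m.comp measurable_fst))
  have hGm : Measurable G := by
    borelize ℝ
    exact (hFm.comp measurable_fst).indicator hSmeas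
  have hpt : ∀ ω, F ω * ENNReal.ofReal (min (w₁ ω) (w₂ ω))
      = ∫⁻ t in Set.Ioi (0:ℝ), G (ω, t) := by
    intro ω
    have hset : MeasurableSet {t : ℝ | t < w₁ ω ∧ t < w₂ ω} :=
      (measurableSet_lt measurable_id measurable_const).inter
        (measurableSet_lt measurable_id measurable_const)
    have h1 : (∫⁻ t in Set.Ioi (0:ℝ), G (ω, t))
        = ∫⁻ t in Set.Ioi (0:ℝ), ({t : ℝ | t < w₁ ω ∧ t < w₂ ω}).indicator (fun _ => F ω) t := rfl
    rw [h1, lintegral_indicator hset, Measure.restrict_restrict hset]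
    have hinter : {t : ℝ | t < w₁ ω ∧ t < w₂ ω} ∩ Set.Ioi 0 = Set.Ioo 0 (min (w₁ ω) (w₂ ω)) := by
      ext t
      simp only [Set.mem_inter_iff, Set.mem_setOf_eq, Set.mem_Ioi, Set.mem_Ioo, lt_min_iff]
      tauto
    rw [hinter, setLIntegral_const, Real.volume_Ioo, sub_zero, mul_comm]
  calc ∫⁻ ω, F ω * ENNReal.ofReal (min (w₁ ω) (w₂ ω)) ∂μ
      = ∫⁻ ω, (∫⁻ t in Set.Ioi (0:ℝ), G (ω, t)) ∂μ := lintegral_congr hpt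
    _ = ∫⁻ t in Set.Ioi (0:ℝ), (∫⁻ ω, G (ω, t) ∂μ) := by
        rw [lintegral_lintegral_swap hGm.aemeasurable]
    _ ≤ ∫⁻ t in Set.Ioi (0:ℝ), (μ {ω | t < w₁ ω} + μ {ω | t < w₂ ω}) := by
        refine lintegral_mono fun t => ?_
        have hEm : MeasurableSet[m0] ({ω | t < w₁ ω} ∩ {ω | t < w₂ ω}) :=
          (measurableSet_lt measurable_const hw₁m).inter
            (measurableSet_lt measurable_const hw₂m)
        have h2 : (∫⁻ ω, G (ω, t) ∂μ)
            = ∫⁻ ω in {ω | t < w₁ ω} ∩ {ω | t < w₂ ω}, F ω ∂μ := by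
          rw [← lintegral_indicator hEm]
          refine lintegral_congr fun ω => ?_
          by_cases h : t < w₁ ω ∧ t < w₂ ω <;>
            simp [hG, Set.indicator, h, Set.mem_inter_iff, Set.mem_setOf_eq]
        rw [h2]
        exact hbound _ _ (hw₁ measurableSet_Ioi) (hw₂ measurableSet_Ioi)
    _ = (∫⁻ t in Set.Ioi (0:ℝ), μ {ω | t < w₁ ω})
          + ∫⁻ t in Set.Ioi (0:ℝ), μ {ω | t < w₂ ω} := by
        refine lintegral_add_left ?_ _
        exact Antitone.measurable fun s t hst => measure_mono fun ω hω => lt_of_le_of_lt hst hω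
    _ ≤ 1 + 1 := by
        refine add_le_add ?_ ?_
        · rw [← lintegral_eq_lintegral_meas_lt μ (ae_of_all _ hw₁0) hw₁m.aemeasurable]; exact hi₁
        · rw [← lintegral_eq_lintegral_meas_lt μ (ae_of_all _ hw₂0) hw₂m.aemeasurable]; exact hi₂
    _ = 2 := one_add_one_eq_two

/-- Finite-family feasibility via finite-dimensional Hahn-Banach. -/
lemma varop_fip (hm₁ : m₁ ≤ m0) (hm₂ : m₂ ≤ m0) (hxm : Measurable[m0] x) (hx : Integrable x μ)
    (hbound : ∀ E₁ E₂ : Set Ω, MeasurableSet[m₁] E₁ → MeasurableSet[m₂] E₂ →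
      ∫⁻ ω in E₁ ∩ E₂, ‖x ω‖₊ ∂μ ≤ μ E₁ + μ E₂)
    (ι : Type*) [Fintype ι] (E₁ E₂ : ι → Set Ω)
    (hE₁ : ∀ i, MeasurableSet[m₁] (E₁ i)) (hE₂ : ∀ i, MeasurableSet[m₂] (E₂ i))
    (hp₁ : ∀ i, 0 < μ (E₁ i)) (hp₂ : ∀ i, 0 < μ (E₂ i))
    (ε : ι → ℝ) (hε : ∀ i, 0 < ε i) :
    ∃ θ : Ω → ℝ, Measurable[m0] θ ∧ (∀ ω, θ ω ∈ Set.Icc (0:ℝ) 1) ∧ ∀ i,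
      (∫ ω in E₁ i, θ ω * |x ω| ∂μ) / (μ (E₁ i)).toReal
        + (∫ ω in E₂ i, (1 - θ ω) * |x ω| ∂μ) / (μ (E₂ i)).toReal ≤ 2 + ε i := by
  classical
  by_contra hcon
  push_neg at hcon
  -- admissible splitting functions and the value map
  set Adm : Set (Ω → ℝ) := {θ | Measurable[m0] θ ∧ ∀ ω, θ ω ∈ Set.Icc (0:ℝ) 1} with hAdm
  set v : (Ω → ℝ) → ι → ℝ := fun θ i =>
    (∫ ω in E₁ i, θ ω * |x ω| ∂μ) / (μ (E₁ i)).toReal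
      + (∫ ω in E₂ i, (1 - θ ω) * |x ω| ∂μ) / (μ (E₂ i)).toReal with hv
  have hcon' : ∀ θ ∈ Adm, ∃ i, 2 + ε i < v θ i := fun θ hθ => hcon θ hθ.1 hθ.2
  -- basic integrability of bounded multiples of |x|
  have hIntBB : ∀ (g : Ω → ℝ), Measurable[m0] g → ∀ B : ℝ, 0 ≤ B → (∀ ω, |g ω| ≤ B) →
      ∀ s : Set Ω, Integrable (fun ω => g ω * |x ω|) (μ.restrict s) := by
    intro g hg B hB0 hB s
    refine Integrable.mono ((hx.abs.restrict (s := s)).const_mul B)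
      (hg.mul hxm.abs).aestronglyMeasurable (ae_of_all _ fun ω => ?_)
    rw [Real.norm_eq_abs, Real.norm_eq_abs, abs_mul, abs_abs, abs_mul, abs_abs,
      abs_of_nonneg hB0]
    exact mul_le_mul_of_nonneg_right (hB ω) (abs_nonneg _)
  have hIntB : ∀ (g : Ω → ℝ), Measurable[m0] g → (∀ ω, |g ω| ≤ 1) →
      ∀ s : Set Ω, Integrable (fun ω => g ω * |x ω|) (μ.restrict s) :=
    fun g hg hB s => hIntBB g hg 1 zero_le_one hB s
  have hAdmBound : ∀ θ ∈ Adm, (∀ ω, |θ ω| ≤ 1) := by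
    intro θ hθ ω
    have := hθ.2 ω
    rw [abs_le]; constructor <;> linarith [this.1, this.2]
  have hAdm1m : ∀ θ ∈ Adm, (fun ω => 1 - θ ω) ∈ Adm := by
    intro θ hθ
    refine ⟨measurable_const.sub hθ.1, fun ω => ?_⟩
    have h := hθ.2 ω
    simp only [Set.mem_Icc] at h ⊢
    constructor <;> [linarith [h.2]; linarith [h.1]]
  -- the two convex sets
  set D : Set (ι → ℝ) := v '' Adm with hD
  set Q : Set (ι → ℝ) := {y | ∀ i, y i < 2 + ε i} with hQ
  have hDconv : Convex ℝ D := by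
    rintro y₁ ⟨θ₁, hθ₁, rfl⟩ y₂ ⟨θ₂, hθ₂, rfl⟩ a b ha hb hab
    refine ⟨fun ω => a * θ₁ ω + b * θ₂ ω, ⟨(hθ₁.1.const_mul a).add (hθ₂.1.const_mul b),
      fun ω => ?_⟩, ?_⟩
    · have g1 := hθ₁.2 ω; have g2 := hθ₂.2 ω
      simp only [Set.mem_Icc] at g1 g2 ⊢
      constructor
      · have := mul_nonneg ha g1.1; have := mul_nonneg hb g2.1; linarith
      · nlinarith [g1.2, g2.2]
    · funext i
      have key : ∀ (θ₁' θ₂' : Ω → ℝ), θ₁' ∈ Adm → θ₂' ∈ Adm → ∀ s : Set Ω,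
          (∫ ω in s, (a * θ₁' ω + b * θ₂' ω) * |x ω| ∂μ)
            = a * ∫ ω in s, θ₁' ω * |x ω| ∂μ + b * ∫ ω in s, θ₂' ω * |x ω| ∂μ := by
        intro θ₁' θ₂' h1 h2 s
        rw [show (fun ω => (a * θ₁' ω + b * θ₂' ω) * |x ω|)
            = fun ω => a * (θ₁' ω * |x ω|) + b * (θ₂' ω * |x ω|) from funext fun ω => by ring]
        rw [integral_add ((hIntB _ h1.1 (hAdmBound _ h1) s).const_mul a)
          ((hIntB _ h2.1 (hAdmBound _ h2) s).const_mul b), integral_const_mul, integral_const_mul]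
      have key2 : ∀ s : Set Ω,
          (∫ ω in s, (1 - (a * θ₁ ω + b * θ₂ ω)) * |x ω| ∂μ)
            = a * ∫ ω in s, (1 - θ₁ ω) * |x ω| ∂μ + b * ∫ ω in s, (1 - θ₂ ω) * |x ω| ∂μ := by
        intro s
        have hptw : (fun ω => (1 - (a * θ₁ ω + b * θ₂ ω)) * |x ω|)
            = fun ω => (a * (1 - θ₁ ω) + b * (1 - θ₂ ω)) * |x ω| := by
          funext ω
          have h1 : (1:ℝ) - (a * θ₁ ω + b * θ₂ ω) = a * (1 - θ₁ ω) + b * (1 - θ₂ ω) := by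
            linear_combination (-1 : ℝ) * hab
          rw [h1]
        rw [hptw, key _ _ (hAdm1m _ hθ₁) (hAdm1m _ hθ₂) s]
      simp only [hv, Pi.add_apply, Pi.smul_apply, smul_eq_mul]
      rw [key _ _ hθ₁ hθ₂, key2]
      ring
  have hQconv : Convex ℝ Q := by
    have : Q = ⋂ i, {y : ι → ℝ | y i < 2 + ε i} := by
      ext y; simp [hQ, Set.mem_iInter]
    rw [this]
    exact convex_iInter fun i => convex_halfSpace_lt ⟨fun _ _ => rfl, fun _ _ => rfl⟩ _
  have hQopen : IsOpen Q := by
    have : Q = ⋂ i, {y : ι → ℝ | y i < 2 + ε i} := by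
      ext y; simp [hQ, Set.mem_iInter]
    rw [this]
    exact isOpen_iInter_of_finite fun i => isOpen_lt (continuous_apply i) continuous_const
  have hdisj : Disjoint Q D := by
    rw [Set.disjoint_left]
    rintro y hyQ ⟨θ, hθ, rfl⟩
    obtain ⟨i, hi⟩ := hcon' θ hθ
    exact absurd (hyQ i) (not_lt.2 hi.le)
  obtain ⟨f, u, hfQ, hfD⟩ := geometric_hahn_banach_open hQconv hQopen hDconv hdisj
  set lam : ι → ℝ := fun i => f (Pi.single i (1:ℝ)) with hlam
  have hf_eq : ∀ y : ι → ℝ, f y = ∑ i, y i * lam i := by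
    intro y
    have hy : y = ∑ i, y i • (Pi.single i (1:ℝ) : ι → ℝ) := by
      funext j
      rw [Finset.sum_apply]
      rw [Finset.sum_eq_single j]
      · simp
      · intro i _ hij
        simp [Pi.single_eq_of_ne (Ne.symm hij)]
      · intro h; exact absurd (Finset.mem_univ j) h
    conv_lhs => rw [hy]
    rw [map_sum]
    exact Finset.sum_congr rfl fun i _ => by rw [f.map_smul, smul_eq_mul]
  -- const 2 is in Q
  set y2 : ι → ℝ := fun _ => 2 with hy2
  have h2Q : y2 ∈ Q := fun i => by
    show (2:ℝ) < 2 + ε i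
    linarith [hε i]
  have hlam0 : ∀ i, 0 ≤ lam i := by
    intro i
    by_contra hneg
    push_neg at hneg
    set t : ℝ := (u - f y2) / (-lam i) with ht
    have hfu : f y2 < u := hfQ _ h2Q
    have htpos : 0 < t := div_pos (by linarith) (by linarith)
    have hyQ : (y2 - t • (Pi.single i 1 : ι → ℝ)) ∈ Q := by
      intro j
      show (2:ℝ) - t * (Pi.single i 1 : ι → ℝ) j < 2 + ε j
      rcases eq_or_ne i j with h | h
      · subst h
        rw [Pi.single_eq_same, mul_one]
        linarith [hε i]
      · rw [Pi.single_eq_of_ne (Ne.symm h)]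
        simp only [mul_zero, sub_zero]
        linarith [hε j]
    have hlt := hfQ _ hyQ
    rw [map_sub, f.map_smul, smul_eq_mul] at hlt
    have hft : f (Pi.single i 1) = lam i := rfl
    rw [hft] at hlt
    have heq : f y2 - t * lam i = u := by
      have hne : lam i ≠ 0 := ne_of_lt hneg
      have h3 : t * lam i = -(u - f y2) := by
        rw [ht]
        rw [div_mul_eq_mul_div, mul_div_assoc, div_neg, div_self hne]
        ring
      linarith
    linarith
  -- theta = 0 is admissible
  have h0Adm : (fun _ : Ω => (0:ℝ)) ∈ Adm :=
    ⟨measurable_const, fun ω => ⟨le_refl 0, zero_le_one⟩⟩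
  have hsum0 : (0:ℝ) ≤ ∑ i, lam i := Finset.sum_nonneg fun i _ => hlam0 i
  have hsumpos : 0 < ∑ i, lam i := by
    rcases hsum0.lt_or_eq with h | h
    · exact h
    · exfalso
      have hall : ∀ i ∈ Finset.univ, lam i = 0 :=
        (Finset.sum_eq_zero_iff_of_nonneg (fun i _ => hlam0 i)).1 h.symm
      have hf0 : ∀ y : ι → ℝ, f y = 0 := by
        intro y
        rw [hf_eq]
        exact Finset.sum_eq_zero fun i _ => by rw [hall i (Finset.mem_univ i), mul_zero]
      have h1 : (0:ℝ) < u := by have := hfQ _ h2Q; rwa [hf0] at this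
      have h2 : u ≤ 0 := by
        have := hfD _ ⟨_, h0Adm, rfl⟩
        rwa [hf0] at this
      linarith
  set S : ℝ := ∑ i, lam i with hS
  have hu2 : ∑ i, (2 + ε i) * lam i ≤ u := by
    by_contra hlt
    push_neg at hlt
    set δ : ℝ := (∑ i, (2 + ε i) * lam i - u) / S with hδ
    have hδpos : 0 < δ := div_pos (by linarith) hsumpos
    have hyQ : (fun i => 2 + ε i - δ) ∈ Q := fun i => by
      show 2 + ε i - δ < 2 + ε i
      linarith
    have hcl := hfQ _ hyQ
    rw [hf_eq] at hcl
    have hcalc : ∑ i, (2 + ε i - δ) * lam i = ∑ i, (2 + ε i) * lam i - δ * S := by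
      rw [hS, Finset.mul_sum, ← Finset.sum_sub_distrib]
      exact Finset.sum_congr rfl fun i _ => by ring
    have hδS : δ * S = ∑ i, (2 + ε i) * lam i - u := by
      rw [hδ]
      field_simp
    rw [hcalc, hδS] at hcl
    linarith
  -- weight functions
  set c₁ : ι → ℝ := fun i => (μ (E₁ i)).toReal with hc₁
  set c₂ : ι → ℝ := fun i => (μ (E₂ i)).toReal with hc₂
  have hc₁pos : ∀ i, 0 < c₁ i := fun i => ENNReal.toReal_pos (hp₁ i).ne' (measure_ne_top μ _)
  have hc₂pos : ∀ i, 0 < c₂ i := fun i => ENNReal.toReal_pos (hp₂ i).ne' (measure_ne_top μ _)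
  set W₁ : Ω → ℝ := fun ω => ∑ i, lam i * (E₁ i).indicator (fun _ => (c₁ i)⁻¹) ω with hW₁
  set W₂ : Ω → ℝ := fun ω => ∑ i, lam i * (E₂ i).indicator (fun _ => (c₂ i)⁻¹) ω with hW₂
  have hW₁meas : Measurable[m₁] W₁ :=
    Finset.measurable_sum _ fun i _ => (measurable_const.indicator (hE₁ i)).const_mul _
  have hW₂meas : Measurable[m₂] W₂ :=
    Finset.measurable_sum _ fun i _ => (measurable_const.indicator (hE₂ i)).const_mul _
  have hW₁m0 : Measurable[m0] W₁ := hW₁meas.mono hm₁ le_rfl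
  have hW₂m0 : Measurable[m0] W₂ := hW₂meas.mono hm₂ le_rfl
  have hW₁0 : ∀ ω, 0 ≤ W₁ ω := fun ω => Finset.sum_nonneg fun i _ =>
    mul_nonneg (hlam0 i) (Set.indicator_nonneg (fun _ _ => inv_nonneg.2 (hc₁pos i).le) ω)
  have hW₂0 : ∀ ω, 0 ≤ W₂ ω := fun ω => Finset.sum_nonneg fun i _ =>
    mul_nonneg (hlam0 i) (Set.indicator_nonneg (fun _ _ => inv_nonneg.2 (hc₂pos i).le) ω)
  have hW₁int : Integrable W₁ μ := integrable_finset_sum _ fun i _ =>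
    ((integrable_indicator_iff (hm₁ _ (hE₁ i))).2
      (integrableOn_const (measure_lt_top μ _).ne)).const_mul _
  have hW₂int : Integrable W₂ μ := integrable_finset_sum _ fun i _ =>
    ((integrable_indicator_iff (hm₂ _ (hE₂ i))).2
      (integrableOn_const (measure_lt_top μ _).ne)).const_mul _
  have hW₁integral : ∫ ω, W₁ ω ∂μ = S := by
    rw [integral_finset_sum _ (fun i _ => ((integrable_indicator_iff (hm₁ _ (hE₁ i))).2
      (integrableOn_const (measure_lt_top μ _).ne)).const_mul _), hS]
    refine Finset.sum_congr rfl fun i _ => ?_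
    rw [integral_const_mul, integral_indicator_const _ (hm₁ _ (hE₁ i)), smul_eq_mul]
    have hrid : μ.real (E₁ i) = c₁ i := rfl
    rw [hrid, mul_inv_cancel₀ (hc₁pos i).ne', mul_one]
  have hW₂integral : ∫ ω, W₂ ω ∂μ = S := by
    rw [integral_finset_sum _ (fun i _ => ((integrable_indicator_iff (hm₂ _ (hE₂ i))).2
      (integrableOn_const (measure_lt_top μ _).ne)).const_mul _), hS]
    refine Finset.sum_congr rfl fun i _ => ?_
    rw [integral_const_mul, integral_indicator_const _ (hm₂ _ (hE₂ i)), smul_eq_mul]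
    have hrid : μ.real (E₂ i) = c₂ i := rfl
    rw [hrid, mul_inv_cancel₀ (hc₂pos i).ne', mul_one]
  have hlint₁ : ∫⁻ ω, ENNReal.ofReal (W₁ ω / S) ∂μ ≤ 1 := by
    rw [← ofReal_integral_eq_lintegral_ofReal (hW₁int.div_const S)
      (ae_of_all _ fun ω => div_nonneg (hW₁0 ω) hsum0)]
    rw [integral_div, hW₁integral, div_self hsumpos.ne', ENNReal.ofReal_one]
  have hlint₂ : ∫⁻ ω, ENNReal.ofReal (W₂ ω / S) ∂μ ≤ 1 := by
    rw [← ofReal_integral_eq_lintegral_ofReal (hW₂int.div_const S)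
      (ae_of_all _ fun ω => div_nonneg (hW₂0 ω) hsum0)]
    rw [integral_div, hW₂integral, div_self hsumpos.ne', ENNReal.ofReal_one]
  have hlayer := varop_layercake hm₁ hm₂ hxm hbound (hW₁meas.div_const S) (hW₂meas.div_const S)
    (fun ω => div_nonneg (hW₁0 ω) hsum0) (fun ω => div_nonneg (hW₂0 ω) hsum0) hlint₁ hlint₂
  set Sset : Set Ω := {ω | W₁ ω ≤ W₂ ω} with hSset
  have hSsetm : MeasurableSet[m0] Sset := measurableSet_le hW₁m0 hW₂m0
  set θb : Ω → ℝ := Sset.indicator (fun _ => 1) with hθb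
  have hθbAdm : θb ∈ Adm := by
    refine ⟨measurable_const.indicator hSsetm, fun ω => ?_⟩
    by_cases h : ω ∈ Sset
    · simp [hθb, Set.indicator_of_mem h]
    · simp [hθb, Set.indicator_of_notMem h]
  have hminpt : ∀ ω, θb ω * W₁ ω + (1 - θb ω) * W₂ ω = min (W₁ ω) (W₂ ω) := by
    intro ω
    by_cases h : ω ∈ Sset
    · rw [hθb]
      rw [Set.indicator_of_mem h]
      rw [min_eq_left h]
      ring
    · rw [hθb]
      rw [Set.indicator_of_notMem h]
      rw [min_eq_right (le_of_not_ge h)]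
      ring
  have hsplit : ∀ (θ' : Ω → ℝ), Measurable[m0] θ' → (∀ ω, |θ' ω| ≤ 1) →
      ∀ (E : Set Ω), MeasurableSet[m0] E → ∀ c : ℝ, 0 < c →
      (∫ ω in E, θ' ω * |x ω| ∂μ) / c
        = ∫ ω, E.indicator (fun _ => c⁻¹) ω * θ' ω * |x ω| ∂μ := by
    intro θ' hθ' hθ'b E hE c hc
    rw [div_eq_inv_mul, ← integral_const_mul, ← integral_indicator hE]
    refine integral_congr_ae (ae_of_all _ fun ω => ?_)
    by_cases h : ω ∈ E
    · simp only [Set.indicator_apply, if_pos h]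
      ring
    · simp only [Set.indicator_apply, if_neg h]
      ring
  have hθbb : ∀ ω, |θb ω| ≤ 1 := hAdmBound _ hθbAdm
  have h1θbb : ∀ ω, |1 - θb ω| ≤ 1 := hAdmBound _ (hAdm1m _ hθbAdm)
  have hθbm : Measurable[m0] θb := hθbAdm.1
  have h1θbm : Measurable[m0] (fun ω => 1 - θb ω) := measurable_const.sub hθbm
  set φ : ι → Ω → ℝ := fun i ω => lam i * ((E₁ i).indicator (fun _ => (c₁ i)⁻¹) ω * θb ω * |x ω|
      + (E₂ i).indicator (fun _ => (c₂ i)⁻¹) ω * (1 - θb ω) * |x ω|) with hφ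
  have hIntInd : ∀ (E : Set Ω), MeasurableSet[m0] E → ∀ c : ℝ, 0 < c →
      ∀ (θ' : Ω → ℝ), Measurable[m0] θ' → (∀ ω, |θ' ω| ≤ 1) →
      Integrable (fun ω => E.indicator (fun _ => c⁻¹) ω * θ' ω * |x ω|) μ := by
    intro E hE c hc θ' hθ' hθ'b
    have key := hIntBB (fun ω => E.indicator (fun _ => c⁻¹) ω * θ' ω)
      ((measurable_const.indicator hE).mul hθ') c⁻¹ (inv_nonneg.2 hc.le)
      (fun ω => ?_) Set.univ
    · rw [Measure.restrict_univ] at key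
      exact key.congr (ae_of_all _ fun ω => by ring)
    · rw [abs_mul]
      have h1 : |E.indicator (fun _ => c⁻¹) ω| ≤ c⁻¹ := by
        by_cases h : ω ∈ E
        · rw [Set.indicator_of_mem h, abs_of_nonneg (inv_nonneg.2 hc.le)]
        · rw [Set.indicator_of_notMem h, abs_zero]
          exact inv_nonneg.2 hc.le
      calc |E.indicator (fun _ => c⁻¹) ω| * |θ' ω|
          ≤ c⁻¹ * 1 := mul_le_mul h1 (hθ'b ω) (abs_nonneg _) (inv_nonneg.2 hc.le)
        _ = c⁻¹ := mul_one _
  have hφint : ∀ i, Integrable (φ i) μ := by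
    intro i
    refine Integrable.const_mul ?_ _
    exact (hIntInd _ (hm₁ _ (hE₁ i)) _ (hc₁pos i) θb hθbm hθbb).add
      (hIntInd _ (hm₂ _ (hE₂ i)) _ (hc₂pos i) _ h1θbm h1θbb)
  have hstep1 : ∀ i, v θb i * lam i = ∫ ω, φ i ω ∂μ := by
    intro i
    rw [hφ]
    simp only
    rw [hv]
    simp only
    rw [hsplit θb hθbm hθbb _ (hm₁ _ (hE₁ i)) _ (hc₁pos i),
      hsplit _ h1θbm h1θbb _ (hm₂ _ (hE₂ i)) _ (hc₂pos i)]
    rw [mul_comm]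
    rw [← integral_add (hIntInd _ (hm₁ _ (hE₁ i)) _ (hc₁pos i) θb hθbm hθbb)
      (hIntInd _ (hm₂ _ (hE₂ i)) _ (hc₂pos i) _ h1θbm h1θbb), ← integral_const_mul]
  have hstep2 : ∑ i, v θb i * lam i = ∫ ω, (θb ω * W₁ ω + (1 - θb ω) * W₂ ω) * |x ω| ∂μ := by
    rw [show ∑ i, v θb i * lam i = ∑ i, ∫ ω, φ i ω ∂μ from
      Finset.sum_congr rfl fun i _ => hstep1 i]
    rw [← integral_finset_sum _ fun i _ => hφint i]
    refine integral_congr_ae (ae_of_all _ fun ω => ?_)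
    rw [hφ, hW₁, hW₂]
    simp only
    rw [Finset.mul_sum, Finset.mul_sum, add_mul, Finset.sum_mul, Finset.sum_mul,
      ← Finset.sum_add_distrib]
    exact Finset.sum_congr rfl fun i _ => by ring
  set gmin : Ω → ℝ := fun ω => min (W₁ ω / S) (W₂ ω / S) * |x ω| with hgmin
  have hgminmeas : Measurable[m0] gmin := ((hW₁m0.div_const S).min (hW₂m0.div_const S)).mul hxm.abs
  have hB : ∀ ω, |min (W₁ ω / S) (W₂ ω / S)| ≤ (∑ i, lam i * (c₁ i)⁻¹) / S := by
    intro ω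
    rw [abs_of_nonneg (le_min (div_nonneg (hW₁0 ω) hsum0) (div_nonneg (hW₂0 ω) hsum0))]
    refine (min_le_left _ _).trans ?_
    refine (div_le_div_iff_of_pos_right hsumpos).2 ?_
    refine Finset.sum_le_sum fun i _ => ?_
    refine mul_le_mul_of_nonneg_left ?_ (hlam0 i)
    by_cases h : ω ∈ E₁ i
    · rw [Set.indicator_of_mem h]
    · rw [Set.indicator_of_notMem h]
      exact inv_nonneg.2 (hc₁pos i).le
  set Bc : ℝ := (∑ i, lam i * (c₁ i)⁻¹) / S with hBc
  have hBc0 : 0 ≤ Bc := div_nonneg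
    (Finset.sum_nonneg fun i _ => mul_nonneg (hlam0 i) (inv_nonneg.2 (hc₁pos i).le)) hsum0
  have hgmint : Integrable gmin μ := by
    have h := hIntBB (fun ω => min (W₁ ω / S) (W₂ ω / S))
      ((hW₁m0.div_const S).min (hW₂m0.div_const S)) Bc hBc0 hB Set.univ
    rwa [Measure.restrict_univ] at h
  have hgm2 : ∫ ω, gmin ω ∂μ ≤ 2 := by
    have hofReal : ENNReal.ofReal (∫ ω, gmin ω ∂μ)
        = ∫⁻ ω, (‖x ω‖₊ : ℝ≥0∞) * ENNReal.ofReal (min (W₁ ω / S) (W₂ ω / S)) ∂μ := by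
      rw [ofReal_integral_eq_lintegral_ofReal hgmint (ae_of_all _ fun ω =>
        mul_nonneg (le_min (div_nonneg (hW₁0 ω) hsum0) (div_nonneg (hW₂0 ω) hsum0))
          (abs_nonneg _))]
      refine lintegral_congr fun ω => ?_
      rw [hgmin]
      simp only
      rw [ENNReal.ofReal_mul (le_min (div_nonneg (hW₁0 ω) hsum0) (div_nonneg (hW₂0 ω) hsum0))]
      rw [← enorm_eq_nnnorm, Real.enorm_eq_ofReal_abs, mul_comm]
    have h2 : ENNReal.ofReal (∫ ω, gmin ω ∂μ) ≤ ENNReal.ofReal 2 := by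
      rw [hofReal, ENNReal.ofReal_ofNat]
      exact hlayer
    exact (ENNReal.ofReal_le_ofReal_iff (by norm_num)).1 h2
  have hmin_int : ∫ ω, min (W₁ ω) (W₂ ω) * |x ω| ∂μ = S * ∫ ω, gmin ω ∂μ := by
    rw [← integral_const_mul]
    refine integral_congr_ae (ae_of_all _ fun ω => ?_)
    rw [hgmin]
    simp only
    rw [min_div_div_right hsum0]
    field_simp
  have hval : ∑ i, v θb i * lam i ≤ 2 * S := by
    rw [hstep2]
    have hcongr : ∫ ω, (θb ω * W₁ ω + (1 - θb ω) * W₂ ω) * |x ω| ∂μ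
        = ∫ ω, min (W₁ ω) (W₂ ω) * |x ω| ∂μ := by
      refine integral_congr_ae (ae_of_all _ fun ω => ?_)
      simp only
      rw [hminpt ω]
    rw [hcongr, hmin_int]
    calc S * ∫ ω, gmin ω ∂μ ≤ S * 2 := mul_le_mul_of_nonneg_left hgm2 hsum0
      _ = 2 * S := mul_comm _ _
  have huD : u ≤ ∑ i, v θb i * lam i := by
    have h := hfD _ ⟨θb, hθbAdm, rfl⟩
    rwa [hf_eq] at h
  have hεlam : 0 < ∑ i, ε i * lam i := by
    have hex : ∃ i, 0 < lam i := by
      by_contra hno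
      push_neg at hno
      have : S ≤ 0 := Finset.sum_nonpos fun i _ => hno i
      linarith
    obtain ⟨i₀, hi₀⟩ := hex
    have hle : ε i₀ * lam i₀ ≤ ∑ i, ε i * lam i :=
      Finset.single_le_sum (fun i _ => mul_nonneg (hε i).le (hlam0 i)) (Finset.mem_univ i₀)
    nlinarith [hε i₀]
  have hsum2 : ∑ i, (2 + ε i) * lam i = 2 * S + ∑ i, ε i * lam i := by
    rw [hS, Finset.mul_sum, ← Finset.sum_add_distrib]
    exact Finset.sum_congr rfl fun i _ => by ring
  linarith [hu2, hval, huD]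

theorem varop_aux (hm₁ : m₁ ≤ m0) (hm₂ : m₂ ≤ m0)
    (hxm : Measurable[m0] x) (hx : Integrable x μ)
    (hbound : ∀ E₁ E₂ : Set Ω, MeasurableSet[m₁] E₁ → MeasurableSet[m₂] E₂ →
      ∫⁻ ω in E₁ ∩ E₂, ‖x ω‖₊ ∂μ ≤ μ E₁ + μ E₂) :
    ∃ x₁ x₂ : Ω → ℝ, Integrable x₁ μ ∧ Integrable x₂ μ ∧
      x =ᵐ[μ] x₁ + x₂ ∧
      condLinftyNorm (m0 := m0) μ m₁ x₁ + condLinftyNorm (m0 := m0) μ m₂ x₂ ≤ 2 := by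
  classical
  set F : Ω → ℝ≥0∞ := fun ω => (‖x ω‖₊ : ℝ≥0∞) with hF
  have hFm : Measurable[m0] F := hxm.enorm
  have hFfin : ∫⁻ ω, F ω ∂μ ≠ ∞ := hx.2.ne
  set ρ : Measure Ω := μ.withDensity F with hρ
  haveI hρfin : IsFiniteMeasure ρ := isFiniteMeasure_withDensity hFfin
  set R : Set Ω → ℝ := fun A => ∫ ω in A, |x ω| ∂μ with hR
  have hρA : ∀ A : Set Ω, MeasurableSet[m0] A → ρ A = ∫⁻ ω in A, F ω ∂μ := fun A hA =>
    withDensity_apply F hA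
  have hRA : ∀ A : Set Ω, R A = (∫⁻ ω in A, F ω ∂μ).toReal := by
    intro A
    rw [hR]
    simp only
    rw [integral_eq_lintegral_of_nonneg_ae (ae_of_all _ fun ω => abs_nonneg (x ω))
      hxm.abs.aestronglyMeasurable.restrict]
    congr 1
    exact lintegral_congr fun ω => (Real.enorm_eq_ofReal_abs (x ω)).symm
  have hofRealR : ∀ A : Set Ω, MeasurableSet[m0] A → ENNReal.ofReal (R A) = ρ A := by
    intro A hA
    rw [hRA A, ← hρA A hA, ENNReal.ofReal_toReal (measure_ne_top ρ A)]
  have hR0 : ∀ A, 0 ≤ R A := fun A => integral_nonneg fun ω => abs_nonneg _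
  -- index type of constraints
  set J := {p : Set Ω × Set Ω × ℝ // MeasurableSet[m₁] p.1 ∧ MeasurableSet[m₂] p.2.1 ∧
    0 < μ p.1 ∧ 0 < μ p.2.1 ∧ 0 < p.2.2} with hJ
  set K : J → Set (Set Ω → ℝ) := fun j =>
    {g | g j.1.1 / (μ j.1.1).toReal + (R j.1.2.1 - g j.1.2.1) / (μ j.1.2.1).toReal
      ≤ 2 + j.1.2.2} with hK
  set T : Set (Set Ω → ℝ) := {g | (∀ A, g A ∈ Set.Icc 0 (R A)) ∧
    ∀ A B : Set Ω, MeasurableSet[m0] A → MeasurableSet[m0] B → Disjoint A B →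
      g (A ∪ B) = g A + g B} with hT
  have hTcomp : IsCompact T := by
    have hpic : IsCompact (Set.pi Set.univ fun A : Set Ω => Set.Icc (0:ℝ) (R A)) :=
      isCompact_univ_pi fun A => isCompact_Icc
    refine hpic.of_isClosed_subset ?_ ?_
    · have h1 : IsClosed {g : Set Ω → ℝ | ∀ A, g A ∈ Set.Icc 0 (R A)} := by
        have : {g : Set Ω → ℝ | ∀ A, g A ∈ Set.Icc 0 (R A)}
            = ⋂ A : Set Ω, (fun g : Set Ω → ℝ => g A) ⁻¹' (Set.Icc 0 (R A)) := by
          ext g; simp [Set.mem_iInter]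
        rw [this]
        exact isClosed_iInter fun A => IsClosed.preimage (continuous_apply A) isClosed_Icc
      have h2 : IsClosed {g : Set Ω → ℝ | ∀ A B : Set Ω, MeasurableSet[m0] A →
          MeasurableSet[m0] B → Disjoint A B → g (A ∪ B) = g A + g B} := by
        have : {g : Set Ω → ℝ | ∀ A B : Set Ω, MeasurableSet[m0] A →
            MeasurableSet[m0] B → Disjoint A B → g (A ∪ B) = g A + g B}
            = ⋂ (A : Set Ω) (B : Set Ω) (_ : MeasurableSet[m0] A) (_ : MeasurableSet[m0] B)
              (_ : Disjoint A B), {g : Set Ω → ℝ | g (A ∪ B) = g A + g B} := by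
          ext g; simp [Set.mem_iInter]
        rw [this]
        refine isClosed_iInter fun A => isClosed_iInter fun B => isClosed_iInter fun _ =>
          isClosed_iInter fun _ => isClosed_iInter fun _ => ?_
        exact isClosed_eq (continuous_apply (A ∪ B)) ((continuous_apply A).add (continuous_apply B))
      have : T = {g : Set Ω → ℝ | ∀ A, g A ∈ Set.Icc 0 (R A)}
          ∩ {g : Set Ω → ℝ | ∀ A B : Set Ω, MeasurableSet[m0] A →
          MeasurableSet[m0] B → Disjoint A B → g (A ∪ B) = g A + g B} := rfl
      rw [this]
      exact h1.inter h2
    · intro g hg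
      rw [Set.mem_univ_pi]
      exact fun A => hg.1 A
  have hKclosed : ∀ j, IsClosed (K j) := by
    intro j
    refine isClosed_le ?_ continuous_const
    exact (Continuous.div_const (continuous_apply _) _).add
      ((continuous_const.sub (continuous_apply _)).div_const _)
  -- integrability helper
  have hIntOn : ∀ (θ : Ω → ℝ), Measurable[m0] θ → (∀ ω, θ ω ∈ Set.Icc (0:ℝ) 1) →
      ∀ s : Set Ω, Integrable (fun ω => θ ω * |x ω|) (μ.restrict s) := by
    intro θ hθ hθr s
    refine Integrable.mono (hx.abs.restrict (s := s)) (hθ.mul hxm.abs).aestronglyMeasurable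
      (ae_of_all _ fun ω => ?_)
    rw [Real.norm_eq_abs, Real.norm_eq_abs, abs_abs, abs_mul, abs_abs]
    refine mul_le_of_le_one_left (abs_nonneg _) ?_
    rw [abs_le]
    exact ⟨by linarith [(hθr ω).1], (hθr ω).2⟩
  -- nonempty intersection via FIP
  have hne : (T ∩ ⋂ j : J, K j).Nonempty := by
    by_contra hemp
    rw [Set.not_nonempty_iff_eq_empty] at hemp
    obtain ⟨u, hu⟩ := hTcomp.elim_finite_subfamily_closed K hKclosed hemp
    obtain ⟨θ, hθm, hθr, hθc⟩ := varop_fip hm₁ hm₂ hxm hx hbound {j : J // j ∈ u}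
      (fun i => i.1.1.1) (fun i => i.1.1.2.1)
      (fun i => i.1.2.1) (fun i => i.1.2.2.1)
      (fun i => i.1.2.2.2.1) (fun i => i.1.2.2.2.2.1)
      (fun i => i.1.1.2.2) (fun i => i.1.2.2.2.2.2)
    set gθ : Set Ω → ℝ := fun A => ∫ ω in A, θ ω * |x ω| ∂μ with hgθ
    have hgθT : gθ ∈ T := by
      constructor
      · intro A
        constructor
        · exact integral_nonneg fun ω => mul_nonneg (hθr ω).1 (abs_nonneg _)
        · exact integral_mono (hIntOn θ hθm hθr A) (hx.abs.restrict (s := A))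
            (fun ω => mul_le_of_le_one_left (abs_nonneg _) (hθr ω).2)
      · intro A B hA hB hAB
        exact setIntegral_union hAB hB (hIntOn θ hθm hθr A) (hIntOn θ hθm hθr B)
    have hgθK : ∀ j ∈ u, gθ ∈ K j := by
      intro j hj
      have h := hθc ⟨j, hj⟩
      have hsub : R j.1.2.1 - gθ j.1.2.1 = ∫ ω in j.1.2.1, (1 - θ ω) * |x ω| ∂μ := by
        rw [hR, hgθ]
        simp only
        rw [← integral_sub (hx.abs.restrict (s := j.1.2.1)) (hIntOn θ hθm hθr j.1.2.1)]
        refine integral_congr_ae (ae_of_all _ fun ω => ?_)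
        ring
      show gθ j.1.1 / (μ j.1.1).toReal + (R j.1.2.1 - gθ j.1.2.1) / (μ j.1.2.1).toReal
        ≤ 2 + j.1.2.2
      rw [hsub]
      exact h
    have : gθ ∈ T ∩ ⋂ j ∈ u, K j := ⟨hgθT, Set.mem_iInter₂.2 hgθK⟩
    rw [hu] at this
    exact this
  obtain ⟨g, hgT, hgKall⟩ := hne
  have hgbox : ∀ A, 0 ≤ g A ∧ g A ≤ R A := fun A => ⟨(hgT.1 A).1, (hgT.1 A).2⟩
  have hgadd : ∀ A B : Set Ω, MeasurableSet[m0] A → MeasurableSet[m0] B → Disjoint A B →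
      g (A ∪ B) = g A + g B := hgT.2
  have hg0 : g ∅ = 0 := by
    have := hgadd ∅ ∅ MeasurableSet.empty MeasurableSet.empty (disjoint_bot_left)
    rw [Set.union_empty] at this
    linarith
  have hgK : ∀ (A B : Set Ω), MeasurableSet[m₁] A → MeasurableSet[m₂] B →
      0 < μ A → 0 < μ B → ∀ e : ℝ, 0 < e →
      g A / (μ A).toReal + (R B - g B) / (μ B).toReal ≤ 2 + e := by
    intro A B hA hB hpA hpB e he
    have hj : (⟨(A, B, e), hA, hB, hpA, hpB, he⟩ : J) ∈ (Set.univ : Set J) := trivial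
    have := Set.mem_iInter.1 hgKall ⟨(A, B, e), hA, hB, hpA, hpB, he⟩
    exact this
  -- countable additivity of g
  have hcadd : ∀ ⦃f : ℕ → Set Ω⦄, (∀ i, MeasurableSet[m0] (f i)) → Pairwise (Function.onFun Disjoint f) →
      ENNReal.ofReal (g (⋃ i, f i)) = ∑' i, ENNReal.ofReal (g (f i)) := by
    intro f hf hd
    set U : ℕ → Set Ω := fun N => ⋃ i ∈ Finset.range N, f i with hU
    have hUm : ∀ N, MeasurableSet[m0] (U N) := fun N =>
      (Finset.range N).measurableSet_biUnion (fun i _ => hf i)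
    have hUfin : ∀ N, g (U N) = ∑ i ∈ Finset.range N, g (f i) := by
      intro N
      induction N with
      | zero => simp [hU, hg0]
      | succ n ih =>
        have hun : U (n+1) = f n ∪ U n := by
          rw [hU]
          simp only
          rw [Finset.range_add_one, Finset.set_biUnion_insert]
        have hdisj : Disjoint (f n) (U n) := by
          refine Set.disjoint_left.2 fun a ha hmem => ?_
          obtain ⟨i, hi, hai⟩ := Set.mem_iUnion₂.1 hmem
          exact Set.disjoint_left.1 (hd (Finset.mem_range.1 hi).ne) hai ha
        rw [hun, hgadd _ _ (hf n) (hUm n) hdisj, ih, Finset.sum_range_succ]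
        ring
    set W : ℕ → Set Ω := fun N => ⋃ i, f (i + N) with hW
    have hWm : ∀ N, MeasurableSet[m0] (W N) := fun N => MeasurableSet.iUnion fun i => hf _
    have hsplitN : ∀ N, g (⋃ i, f i) = g (U N) + g (W N) := by
      intro N
      have hUW : (⋃ i, f i) = U N ∪ W N := by
        ext a
        simp only [Set.mem_iUnion, hU, hW, Set.mem_union, Set.mem_iUnion₂, Finset.mem_range]
        constructor
        · rintro ⟨i, hi⟩
          rcases lt_or_ge i N with hlt | hge
          · exact Or.inl ⟨i, hlt, hi⟩
          · refine Or.inr ⟨i - N, ?_⟩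
            rwa [Nat.sub_add_cancel hge]
        · rintro (⟨i, _, hai⟩ | ⟨i, hai⟩)
          · exact ⟨i, hai⟩
          · exact ⟨i + N, hai⟩
      have hdisjUW : Disjoint (U N) (W N) := by
        refine Set.disjoint_left.2 fun a ha hmem => ?_
        obtain ⟨i, hi, hai⟩ := Set.mem_iUnion₂.1 ha
        obtain ⟨j, haj⟩ := Set.mem_iUnion.1 hmem
        have hne : i ≠ j + N := by
          have := Finset.mem_range.1 hi
          omega
        exact Set.disjoint_left.1 (hd hne) hai haj
      rw [hUW]
      exact hgadd _ _ (hUm N) (hWm N) hdisjUW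
    have hWanti : Antitone W := by
      intro M N hMN a ha
      obtain ⟨i, hai⟩ := Set.mem_iUnion.1 ha
      refine Set.mem_iUnion.2 ⟨i + (N - M), ?_⟩
      rw [show i + (N - M) + M = i + N from by omega]
      exact hai
    have hWempty : (⋂ N, W N) = ∅ := by
      rw [Set.eq_empty_iff_forall_notMem]
      intro a ha
      have h0 := Set.mem_iInter.1 ha 0
      obtain ⟨i0, hi0⟩ := Set.mem_iUnion.1 h0
      have h1 := Set.mem_iInter.1 ha (i0 + 1)
      obtain ⟨j, hj⟩ := Set.mem_iUnion.1 h1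
      have hne : i0 ≠ j + (i0 + 1) := by omega
      refine Set.disjoint_left.1 (hd hne) ?_ hj
      simpa using hi0
    have hWtend : Filter.Tendsto (fun N => (ρ (W N)).toReal) Filter.atTop (nhds 0) := by
      have h1 : Filter.Tendsto (fun N => ρ (W N)) Filter.atTop (nhds (ρ (⋂ N, W N))) :=
        tendsto_measure_iInter_atTop (fun N => (hWm N).nullMeasurableSet) hWanti
          ⟨0, measure_ne_top ρ _⟩
      rw [hWempty, measure_empty] at h1
      have h2 := (ENNReal.tendsto_toReal (by simp : (0:ℝ≥0∞) ≠ ∞)).comp h1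
      exact h2
    have hgW0 : Filter.Tendsto (fun N => g (W N)) Filter.atTop (nhds 0) := by
      refine squeeze_zero (fun N => (hgbox _).1) (fun N => ?_) hWtend
      calc g (W N) ≤ R (W N) := (hgbox _).2
        _ = (ρ (W N)).toReal := by rw [hRA, hρA _ (hWm N)]
    have hpartial : Filter.Tendsto (fun N => ∑ i ∈ Finset.range N, g (f i)) Filter.atTop
        (nhds (g (⋃ i, f i))) := by
      have heq : ∀ N, ∑ i ∈ Finset.range N, g (f i) = g (⋃ i, f i) - g (W N) := by
        intro N
        rw [← hUfin N]
        linarith [hsplitN N]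
      have h3 : Filter.Tendsto (fun N => g (⋃ i, f i) - g (W N)) Filter.atTop
          (nhds (g (⋃ i, f i) - 0)) := Filter.Tendsto.const_sub _ hgW0
      rw [sub_zero] at h3
      exact Filter.Tendsto.congr (fun N => (heq N).symm) h3
    have hHasSum : HasSum (fun i => g (f i)) (g (⋃ i, f i)) :=
      (hasSum_iff_tendsto_nat_of_nonneg (fun i => (hgbox _).1) _).2 hpartial
    rw [← hHasSum.tsum_eq]
    exact ENNReal.ofReal_tsum_of_nonneg (fun i => (hgbox _).1) hHasSum.summable
  -- the measure ν with ν E = g E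
  set ν : Measure Ω := Measure.ofMeasurable (fun s _ => ENNReal.ofReal (g s))
      (by beta_reduce; rw [hg0]; simp) (fun f hf hd => hcadd hf hd) with hνdef
  have hν : ∀ s : Set Ω, MeasurableSet[m0] s → ν s = ENNReal.ofReal (g s) := fun s hs =>
    Measure.ofMeasurable_apply s hs
  haveI hνfin : IsFiniteMeasure ν :=
    ⟨by rw [hν _ MeasurableSet.univ]; exact ENNReal.ofReal_lt_top⟩
  have hνρ : ∀ s : Set Ω, MeasurableSet[m0] s → ν s ≤ ρ s := fun s hs => by
    rw [hν s hs, ← hofRealR s hs]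
    exact ENNReal.ofReal_le_ofReal (hgbox s).2
  have hνμ : ν ≪ μ := by
    refine Measure.AbsolutelyContinuous.mk fun s hs hs0 => ?_
    have hρ0 : ρ s = 0 := by
      rw [hρA s hs]
      exact setLIntegral_measure_zero s F hs0
    exact le_antisymm (by rw [← hρ0]; exact hνρ s hs) (zero_le)
  set h : Ω → ℝ≥0∞ := ν.rnDeriv μ with hh
  have hhm : Measurable[m0] h := Measure.measurable_rnDeriv ν μ
  have hsl : ∀ s : Set Ω, ∫⁻ ω in s, h ω ∂μ = ν s := fun s =>
    Measure.setLIntegral_rnDeriv hνμ s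
  have hhF : h ≤ᵐ[μ] F := by
    refine ae_le_of_forall_setLIntegral_le_of_sigmaFinite₀ hhm.aemeasurable fun s hs _ => ?_
    rw [hsl s]
    calc ν s ≤ ρ s := hνρ s hs
      _ = ∫⁻ ω in s, F ω ∂μ := hρA s hs
  have hhfin : ∀ᵐ ω ∂μ, h ω < ∞ := Measure.rnDeriv_lt_top ν μ
  -- splitting function and the decomposition
  set θs : Ω → ℝ := fun ω => if x ω = 0 then 0 else min 1 ((h ω).toReal / |x ω|) with hθs
  have hx0m : MeasurableSet[m0] {ω | x ω = 0} := hxm (measurableSet_singleton 0)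
  have hθsm : Measurable[m0] θs := by
    refine Measurable.ite hx0m measurable_const ?_
    exact measurable_const.min (hhm.ennreal_toReal.div hxm.abs)
  have hθs01 : ∀ ω, θs ω ∈ Set.Icc (0:ℝ) 1 := by
    intro ω
    rw [hθs]
    simp only
    by_cases h0 : x ω = 0
    · rw [if_pos h0]; exact ⟨le_rfl, zero_le_one⟩
    · rw [if_neg h0]
      constructor
      · exact le_min zero_le_one (div_nonneg ENNReal.toReal_nonneg (abs_nonneg _))
      · exact min_le_left _ _
  set x₁ : Ω → ℝ := fun ω => θs ω * x ω with hx₁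
  set x₂ : Ω → ℝ := fun ω => (1 - θs ω) * x ω with hx₂
  have hx₁m : Measurable[m0] x₁ := hθsm.mul hxm
  have hx₂m : Measurable[m0] x₂ := (measurable_const.sub hθsm).mul hxm
  have hkey1 : (fun ω => (‖x₁ ω‖₊ : ℝ≥0∞)) =ᵐ[μ] h := by
    filter_upwards [hhF, hhfin] with ω h1 h2
    by_cases h0 : x ω = 0
    · have hF0 : F ω = 0 := by rw [hF]; simp [h0]
      have hh0 : h ω = 0 := le_antisymm (hF0 ▸ h1) (zero_le)
      rw [hx₁]
      simp only
      rw [h0, mul_zero]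
      simp [hh0]
    · have hFω : F ω = ENNReal.ofReal |x ω| := by
        rw [hF]
        simp only
        rw [← enorm_eq_nnnorm, Real.enorm_eq_ofReal_abs]
      have hτ : (h ω).toReal ≤ |x ω| := by
        refine ENNReal.toReal_le_of_le_ofReal (abs_nonneg _) ?_
        rw [← hFω]; exact h1
      have hmin : θs ω = (h ω).toReal / |x ω| := by
        rw [hθs]
        simp only
        rw [if_neg h0]
        exact min_eq_right ((div_le_one (abs_pos.2 h0)).2 hτ)
      have habs : |x₁ ω| = (h ω).toReal := by
        rw [hx₁]
        simp only
        rw [abs_mul, hmin, abs_of_nonneg (div_nonneg ENNReal.toReal_nonneg (abs_nonneg _))]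
        rw [div_mul_cancel₀]
        exact abs_ne_zero.2 h0
      rw [← enorm_eq_nnnorm, Real.enorm_eq_ofReal_abs, habs, ENNReal.ofReal_toReal h2.ne]
  have hkey2 : (fun ω => (‖x₂ ω‖₊ : ℝ≥0∞)) =ᵐ[μ] fun ω => F ω - h ω := by
    filter_upwards [hhF, hhfin] with ω h1 h2
    by_cases h0 : x ω = 0
    · have hF0 : F ω = 0 := by rw [hF]; simp [h0]
      have hh0 : h ω = 0 := le_antisymm (hF0 ▸ h1) (zero_le)
      rw [hx₂]
      simp only
      rw [h0, mul_zero]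
      simp [hh0, hF0]
    · have hFω : F ω = ENNReal.ofReal |x ω| := by
        rw [hF]
        simp only
        rw [← enorm_eq_nnnorm, Real.enorm_eq_ofReal_abs]
      have hτ : (h ω).toReal ≤ |x ω| := by
        refine ENNReal.toReal_le_of_le_ofReal (abs_nonneg _) ?_
        rw [← hFω]; exact h1
      have hmin : θs ω = (h ω).toReal / |x ω| := by
        rw [hθs]
        simp only
        rw [if_neg h0]
        exact min_eq_right ((div_le_one (abs_pos.2 h0)).2 hτ)
      have hfac : (0:ℝ) ≤ 1 - (h ω).toReal / |x ω| := by
        have : (h ω).toReal / |x ω| ≤ 1 := (div_le_one (abs_pos.2 h0)).2 hτ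
        linarith
      have habs : |x₂ ω| = |x ω| - (h ω).toReal := by
        rw [hx₂]
        simp only
        rw [abs_mul, hmin, abs_of_nonneg hfac, sub_mul, one_mul,
          div_mul_cancel₀ _ (abs_ne_zero.2 h0)]
      rw [← enorm_eq_nnnorm, Real.enorm_eq_ofReal_abs, habs,
        ENNReal.ofReal_sub _ ENNReal.toReal_nonneg, ← hFω, ENNReal.ofReal_toReal h2.ne]
  have hx₁i : Integrable x₁ μ := by
    refine hx.mono hx₁m.aestronglyMeasurable (ae_of_all _ fun ω => ?_)
    rw [Real.norm_eq_abs, Real.norm_eq_abs, hx₁]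
    simp only
    rw [abs_mul]
    refine mul_le_of_le_one_left (abs_nonneg _) ?_
    rw [abs_le]
    exact ⟨by linarith [(hθs01 ω).1], (hθs01 ω).2⟩
  have hx₂i : Integrable x₂ μ := by
    refine hx.mono hx₂m.aestronglyMeasurable (ae_of_all _ fun ω => ?_)
    rw [Real.norm_eq_abs, Real.norm_eq_abs, hx₂]
    simp only
    rw [abs_mul]
    refine mul_le_of_le_one_left (abs_nonneg _) ?_
    rw [abs_le]
    constructor
    · linarith [(hθs01 ω).2]
    · linarith [(hθs01 ω).1]
  have hsum : x =ᵐ[μ] x₁ + x₂ := by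
    refine ae_of_all _ fun ω => ?_
    rw [Pi.add_apply, hx₁, hx₂]
    simp only
    ring
  -- set integral identities
  have habsint : ∀ (y : Ω → ℝ), AEStronglyMeasurable y μ → ∀ E : Set Ω,
      ∫ ω in E, |y ω| ∂μ = (∫⁻ ω in E, (‖y ω‖₊ : ℝ≥0∞) ∂μ).toReal := by
    intro y hy E
    rw [integral_eq_lintegral_of_nonneg_ae (ae_of_all _ fun ω => abs_nonneg _)
      hy.norm.restrict]
    congr 1
    exact lintegral_congr fun ω => (Real.enorm_eq_ofReal_abs (y ω)).symm
  have hI1 : ∀ E : Set Ω, MeasurableSet[m0] E → ∫ ω in E, |x₁ ω| ∂μ = g E := by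
    intro E hE
    rw [habsint x₁ hx₁m.aestronglyMeasurable E]
    rw [lintegral_congr_ae (ae_restrict_of_ae hkey1), hsl E, hν E hE,
      ENNReal.toReal_ofReal (hgbox E).1]
  have hI2 : ∀ E : Set Ω, MeasurableSet[m0] E → ∫ ω in E, |x₂ ω| ∂μ = R E - g E := by
    intro E hE
    rw [habsint x₂ hx₂m.aestronglyMeasurable E]
    rw [lintegral_congr_ae (ae_restrict_of_ae hkey2)]
    have hsub : ∫⁻ ω in E, (F ω - h ω) ∂μ = ρ E - ν E := by
      rw [lintegral_sub hhm ?_ (ae_restrict_of_ae hhF)]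
      · rw [hsl E, ← hρA E hE]
      · rw [hsl E]
        exact measure_ne_top ν E
    rw [hsub, ENNReal.toReal_sub_of_le (hνρ E hE) (measure_ne_top ρ E)]
    rw [hν E hE, ENNReal.toReal_ofReal (hgbox E).1]
    congr 1
    rw [hRA E, hρA E hE]
  -- joint constraint on averages
  have hcons : ∀ (A B : Set Ω), MeasurableSet[m₁] A → MeasurableSet[m₂] B →
      0 < μ A → 0 < μ B →
      (∫ ω in A, |x₁ ω| ∂μ) / (μ A).toReal + (∫ ω in B, |x₂ ω| ∂μ) / (μ B).toReal ≤ 2 := by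
    intro A B hA hB hpA hpB
    rw [hI1 A (hm₁ _ hA), hI2 B (hm₂ _ hB)]
    by_contra hlt
    push_neg at hlt
    set e : ℝ := g A / (μ A).toReal + (R B - g B) / (μ B).toReal - 2 with he
    have hepos : 0 < e := by rw [he]; linarith
    have hcon := hgK A B hA hB hpA hpB (e/2) (by linarith)
    rw [he] at hcon
    linarith
  -- suprema of averages
  set Sav₁ : Set ℝ := {r | ∃ E, MeasurableSet[m₁] E ∧ 0 < μ E ∧
    r = (∫ ω in E, |x₁ ω| ∂μ) / (μ E).toReal} with hSav₁
  set Sav₂ : Set ℝ := {r | ∃ E, MeasurableSet[m₂] E ∧ 0 < μ E ∧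
    r = (∫ ω in E, |x₂ ω| ∂μ) / (μ E).toReal} with hSav₂
  have hμuniv : (0:ℝ≥0∞) < μ Set.univ := by simp
  have hmemuniv₁ : ((∫ ω in Set.univ, |x₁ ω| ∂μ) / (μ Set.univ).toReal) ∈ Sav₁ :=
    ⟨Set.univ, MeasurableSet.univ, hμuniv, rfl⟩
  have hmemuniv₂ : ((∫ ω in Set.univ, |x₂ ω| ∂μ) / (μ Set.univ).toReal) ∈ Sav₂ :=
    ⟨Set.univ, MeasurableSet.univ, hμuniv, rfl⟩
  have hr₁0 : 0 ≤ (∫ ω in Set.univ, |x₁ ω| ∂μ) / (μ Set.univ).toReal :=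
    div_nonneg (integral_nonneg fun ω => abs_nonneg _) ENNReal.toReal_nonneg
  have hr₂0 : 0 ≤ (∫ ω in Set.univ, |x₂ ω| ∂μ) / (μ Set.univ).toReal :=
    div_nonneg (integral_nonneg fun ω => abs_nonneg _) ENNReal.toReal_nonneg
  have hpair : ∀ r₁ ∈ Sav₁, ∀ r₂ ∈ Sav₂, r₁ + r₂ ≤ 2 := by
    rintro r₁ ⟨A, hA, hpA, rfl⟩ r₂ ⟨B, hB, hpB, rfl⟩
    exact hcons A B hA hB hpA hpB
  have hbdd₁ : BddAbove Sav₁ := ⟨2, fun r hr => by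
    have := hpair r hr _ hmemuniv₂
    linarith⟩
  have hbdd₂ : BddAbove Sav₂ := ⟨2, fun r hr => by
    have := hpair _ hmemuniv₁ r hr
    linarith⟩
  set c₁ : ℝ := sSup Sav₁ with hc₁
  set c₂ : ℝ := sSup Sav₂ with hc₂
  have hc₁0 : 0 ≤ c₁ := le_trans hr₁0 (le_csSup hbdd₁ hmemuniv₁)
  have hc₂0 : 0 ≤ c₂ := le_trans hr₂0 (le_csSup hbdd₂ hmemuniv₂)
  have hcc : c₁ + c₂ ≤ 2 := by
    have h1 : c₁ ≤ 2 - c₂ := by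
      refine csSup_le ⟨_, hmemuniv₁⟩ fun r₁ h₁ => ?_
      have h2 : c₂ ≤ 2 - r₁ :=
        csSup_le ⟨_, hmemuniv₂⟩ fun r₂ h₂ => by linarith [hpair r₁ h₁ r₂ h₂]
      linarith
    linarith
  have havg₁ : ∀ E : Set Ω, MeasurableSet[m₁] E → 0 < μ E →
      ∫ ω in E, |x₁ ω| ∂μ ≤ c₁ * (μ E).toReal := by
    intro E hE hpE
    have htp : 0 < (μ E).toReal := ENNReal.toReal_pos hpE.ne' (measure_ne_top μ _)
    have hle := le_csSup hbdd₁ (⟨E, hE, hpE, rfl⟩ :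
      ((∫ ω in E, |x₁ ω| ∂μ) / (μ E).toReal) ∈ Sav₁)
    calc ∫ ω in E, |x₁ ω| ∂μ
        = ((∫ ω in E, |x₁ ω| ∂μ) / (μ E).toReal) * (μ E).toReal := by field_simp
      _ ≤ c₁ * (μ E).toReal := mul_le_mul_of_nonneg_right hle htp.le
  have havg₂ : ∀ E : Set Ω, MeasurableSet[m₂] E → 0 < μ E →
      ∫ ω in E, |x₂ ω| ∂μ ≤ c₂ * (μ E).toReal := by
    intro E hE hpE
    have htp : 0 < (μ E).toReal := ENNReal.toReal_pos hpE.ne' (measure_ne_top μ _)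
    have hle := le_csSup hbdd₂ (⟨E, hE, hpE, rfl⟩ :
      ((∫ ω in E, |x₂ ω| ∂μ) / (μ E).toReal) ∈ Sav₂)
    calc ∫ ω in E, |x₂ ω| ∂μ
        = ((∫ ω in E, |x₂ ω| ∂μ) / (μ E).toReal) * (μ E).toReal := by field_simp
      _ ≤ c₂ * (μ E).toReal := mul_le_mul_of_nonneg_right hle htp.le
  have hae₁ : μ[fun ω => |x₁ ω| | m₁] ≤ᵐ[μ] fun _ => c₁ :=
    varop_condexp_ae_le' hm₁ hx₁i.abs c₁ havg₁
  have hae₂ : μ[fun ω => |x₂ ω| | m₂] ≤ᵐ[μ] fun _ => c₂ :=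
    varop_condexp_ae_le' hm₂ hx₂i.abs c₂ havg₂
  refine ⟨x₁, x₂, hx₁i, hx₂i, hsum, ?_⟩
  have hn₁ : condLinftyNorm (m0 := m0) μ m₁ x₁ ≤ ENNReal.ofReal c₁ := by
    unfold condLinftyNorm
    exact essSup_le_of_ae_le _ (hae₁.mono fun ω hω => ENNReal.ofReal_le_ofReal hω)
  have hn₂ : condLinftyNorm (m0 := m0) μ m₂ x₂ ≤ ENNReal.ofReal c₂ := by
    unfold condLinftyNorm
    exact essSup_le_of_ae_le _ (hae₂.mono fun ω hω => ENNReal.ofReal_le_ofReal hω)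
  calc condLinftyNorm (m0 := m0) μ m₁ x₁ + condLinftyNorm (m0 := m0) μ m₂ x₂
      ≤ ENNReal.ofReal c₁ + ENNReal.ofReal c₂ := add_le_add hn₁ hn₂
    _ = ENNReal.ofReal (c₁ + c₂) := (ENNReal.ofReal_add hc₁0 hc₂0).symm
    _ ≤ ENNReal.ofReal 2 := ENNReal.ofReal_le_ofReal hcc
    _ = 2 := by norm_num

end Varop

/-- Conditional expectation version of the Varopoulos lemma, converse with constant 2:
if `∫_{E₁∩E₂} |x| dμ ≤ μ(E₁) + μ(E₂)` for all `ℬⱼ`-measurable sets `Eⱼ`, then there is a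
decomposition `x = x₁ + x₂` a.e. with `‖x₁‖_{C₁} + ‖x₂‖_{C₂} ≤ 2`. -/
theorem condexp_varopoulos_converse
    {Ω : Type*} [m0 : MeasurableSpace Ω] (μ : Measure Ω) [IsProbabilityMeasure μ]
    (m₁ m₂ : MeasurableSpace Ω) (hm₁ : m₁ ≤ m0) (hm₂ : m₂ ≤ m0)
    (x : Ω → ℝ) (hx : Integrable x μ)
    (hbound : ∀ E₁ E₂ : Set Ω, MeasurableSet[m₁] E₁ → MeasurableSet[m₂] E₂ →
      ∫⁻ ω in E₁ ∩ E₂, ‖x ω‖₊ ∂μ ≤ μ E₁ + μ E₂) :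
    ∃ x₁ x₂ : Ω → ℝ, Integrable x₁ μ ∧ Integrable x₂ μ ∧
      x =ᵐ[μ] x₁ + x₂ ∧
      condLinftyNorm (m0 := m0) μ m₁ x₁ + condLinftyNorm (m0 := m0) μ m₂ x₂ ≤ 2 := by
  obtain ⟨x', hx'sm, hxx'⟩ := hx.1
  have hx'm : Measurable[m0] x' := hx'sm.measurable
  have hx' : Integrable x' μ := hx.congr hxx'
  have hbound' : ∀ E₁ E₂ : Set Ω, MeasurableSet[m₁] E₁ → MeasurableSet[m₂] E₂ →
      ∫⁻ ω in E₁ ∩ E₂, ‖x' ω‖₊ ∂μ ≤ μ E₁ + μ E₂ := by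
    intro E₁ E₂ h₁ h₂
    refine le_trans (le_of_eq ?_) (hbound E₁ E₂ h₁ h₂)
    refine lintegral_congr_ae (ae_restrict_of_ae ?_)
    filter_upwards [hxx'] with ω hω
    rw [hω]
  obtain ⟨x₁, x₂, h1, h2, h3, h4⟩ := varop_aux (m0 := m0) hm₁ hm₂ hx'm hx' hbound'
  exact ⟨x₁, x₂, h1, h2, hxx'.trans h3, h4⟩
end

section
/- (Multiplication operator description of the conditional L_∞ norm.) Let (Ω, 𝒜, μ) be a probability space, ℬ ⊆ 𝒜 a sub-σ-algebra, 𝔼_ℬ the conditional expectation with respect to ℬ, and x : Ω → ℝ integrable. Then the essential supremum of 𝔼_ℬ(|x|) equals the operator norm of the multiplication operator M_x : L_1(ℬ, μ) → L_1(𝒜, μ), g ↦ x·g; that is, ess sup 𝔼_ℬ(|x|) = sup{ ∫ |x·g| dμ : g is ℬ-measurable and ∫ |g| dμ ≤ 1 }. -/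
open MeasureTheory ENNReal NNReal

/-- Multiplication operator description of the conditional `L_∞` norm:
`ess sup 𝔼_ℬ(|x|)` equals the norm of the multiplication operator
`M_x : L_1(ℬ,μ) → L_1(𝒜,μ)`, i.e. the supremum of `∫ |x·g| dμ` over `ℬ`-measurable `g` with
`∫ |g| dμ ≤ 1`. -/
theorem condexp_essSup_eq_multiplication_norm
    {Ω : Type*} [m0 : MeasurableSpace Ω] (μ : Measure Ω) [IsProbabilityMeasure μ]
    (m : MeasurableSpace Ω) (hm : m ≤ m0)
    (x : Ω → ℝ) (hx : Integrable x μ) :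
    essSup (fun ω => ENNReal.ofReal ((μ[fun ω' => |x ω'| | m]) ω)) μ
      = ⨆ (g : Ω → ℝ) (_ : Measurable[m] g) (_ : (∫⁻ ω, ‖g ω‖₊ ∂μ) ≤ 1),
          ∫⁻ ω, ‖x ω * g ω‖₊ ∂μ := by
  letI : MeasurableSpace Ω := m0
  set f : Ω → ℝ := μ[fun ω' => |x ω'| | m] with hf_def
  have hf_int : Integrable f μ := integrable_condExp
  have hf_meas : StronglyMeasurable[m] f := stronglyMeasurable_condExp
  have hf_nonneg : 0 ≤ᵐ[μ] f :=
    condExp_nonneg (Filter.Eventually.of_forall fun ω => abs_nonneg _)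
  have hx_abs : Integrable (fun ω => |x ω|) μ := hx.abs
  set L := essSup (fun ω => ENNReal.ofReal (f ω)) μ with hL_def
  apply le_antisymm
  · -- L ≤ sup
    by_contra h
    push_neg at h
    set R := ⨆ (g : Ω → ℝ) (_ : Measurable[m] g) (_ : (∫⁻ ω, ‖g ω‖₊ ∂μ) ≤ 1),
          ∫⁻ ω, ‖x ω * g ω‖₊ ∂μ with hR_def
    obtain ⟨a, haR, haL⟩ := exists_between h
    have ha_top : a ≠ ∞ := (lt_of_lt_of_le haL le_top).ne
    set S : Set Ω := {ω | a.toReal < f ω} with hS_def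
    have hS_meas : MeasurableSet[m] S := hf_meas.measurable measurableSet_Ioi
    have hS_meas0 : MeasurableSet[m0] S := hm _ hS_meas
    have hS_eq : ∀ ω, ω ∈ S ↔ a < ENNReal.ofReal (f ω) := fun ω =>
      (ENNReal.lt_ofReal_iff_toReal_lt ha_top).symm
    have hμS_pos : 0 < μ S := by
      by_contra hpos
      push_neg at hpos
      have hμS0 : μ S = 0 := le_antisymm hpos zero_le
      have hle : (fun ω => ENNReal.ofReal (f ω)) ≤ᵐ[μ] fun _ => a := by
        rw [Filter.EventuallyLE, ae_iff]
        refine measure_mono_null (fun ω hω => ?_) hμS0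
        simp only [Set.mem_setOf_eq, not_le] at hω
        exact (hS_eq ω).mpr hω
      exact absurd (essSup_le_of_ae_le a hle) haL.not_ge
    have hμS_top : μ S ≠ ∞ := measure_ne_top μ S
    set c : ℝ := (μ S).toReal⁻¹ with hc_def
    have hc_nonneg : 0 ≤ c := inv_nonneg.mpr ENNReal.toReal_nonneg
    have hc_ennreal : ENNReal.ofReal c = (μ S)⁻¹ := by
      rw [hc_def, ENNReal.ofReal_inv_of_pos (ENNReal.toReal_pos hμS_pos.ne' hμS_top),
        ENNReal.ofReal_toReal hμS_top]
    set g : Ω → ℝ := S.indicator fun _ => c with hg_def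
    have hg_meas : Measurable[m] g := measurable_const.indicator hS_meas
    have hg_norm : (∫⁻ ω, ‖g ω‖₊ ∂μ) = 1 := by
      have : ∀ ω, (‖g ω‖₊ : ℝ≥0∞) = S.indicator (fun _ => ENNReal.ofReal c) ω := by
        intro ω
        by_cases hω : ω ∈ S <;>
          simp [hg_def, hω, ← enorm_eq_nnnorm, Real.enorm_eq_ofReal hc_nonneg]
      simp_rw [this]
      rw [lintegral_indicator hS_meas0 _, setLIntegral_const, hc_ennreal,
        ENNReal.inv_mul_cancel hμS_pos.ne' hμS_top]
    have key : a ≤ ∫⁻ ω, ‖x ω * g ω‖₊ ∂μ := by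
      have hxg : ∀ ω, (‖x ω * g ω‖₊ : ℝ≥0∞)
          = S.indicator (fun ω => ENNReal.ofReal c * ENNReal.ofReal |x ω|) ω := by
        intro ω
        by_cases hω : ω ∈ S <;>
          simp [hg_def, hω, nnnorm_mul, mul_comm, ← enorm_eq_nnnorm, Real.enorm_eq_ofReal hc_nonneg,
            Real.enorm_eq_ofReal_abs]
      simp_rw [hxg]
      rw [lintegral_indicator hS_meas0 _, lintegral_const_mul' _ _ ENNReal.ofReal_ne_top]
      have h1 : (∫⁻ ω in S, ENNReal.ofReal |x ω| ∂μ) = ENNReal.ofReal (∫ ω in S, |x ω| ∂μ) := by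
        rw [ofReal_integral_eq_lintegral_ofReal hx_abs.integrableOn
          (Filter.Eventually.of_forall fun ω => abs_nonneg _)]
      have h2 : (∫ ω in S, |x ω| ∂μ) = ∫ ω in S, f ω ∂μ := by
        rw [hf_def, setIntegral_condExp hm hx_abs hS_meas]
      have h3 : a.toReal * (μ S).toReal ≤ ∫ ω in S, f ω ∂μ := by
        have := setIntegral_mono_on (integrableOn_const hμS_top)
          hf_int.integrableOn hS_meas0 (fun ω hω => (hω : a.toReal < f ω).le)
        simpa [Measure.restrict_apply_univ, mul_comm, measureReal_def] using this
      calc a = (μ S)⁻¹ * (a * μ S) := by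
              rw [mul_comm a, ← mul_assoc, ENNReal.inv_mul_cancel hμS_pos.ne' hμS_top, one_mul]
        _ ≤ ENNReal.ofReal c * ∫⁻ ω in S, ENNReal.ofReal |x ω| ∂μ := by
              rw [hc_ennreal, h1, h2]
              refine mul_le_mul_right ?_ _
              calc a * μ S = ENNReal.ofReal (a.toReal * (μ S).toReal) := by
                    rw [ENNReal.ofReal_mul ENNReal.toReal_nonneg,
                      ENNReal.ofReal_toReal ha_top, ENNReal.ofReal_toReal hμS_top]
                _ ≤ _ := ENNReal.ofReal_le_ofReal h3
    have : a ≤ R := by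
      refine le_trans key ?_
      rw [hR_def]
      refine le_iSup_of_le g ?_
      rw [iSup_pos hg_meas, iSup_pos hg_norm.le]
    exact absurd this haR.not_ge
  · -- sup ≤ L
    refine iSup_le fun g => iSup_le fun hg_meas => iSup_le fun hg_norm => ?_
    by_cases hL_top : L = ∞
    · rw [hL_top]; exact le_top
    have hf_bdd : ∀ᵐ ω ∂μ, f ω ≤ L.toReal := by
      filter_upwards [ae_le_essSup (fun ω => ENNReal.ofReal (f ω))] with ω hω
      exact (ENNReal.ofReal_le_iff_le_toReal hL_top).mp hω
    have hg0 : Measurable[m0] g := hg_meas.mono hm le_rfl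
    set h : ℕ → Ω → ℝ := fun n ω => min |g ω| n with hh_def
    have hh_nonneg : ∀ n ω, 0 ≤ h n ω := fun n ω => le_min (abs_nonneg _) (Nat.cast_nonneg _)
    have hh_bdd : ∀ n ω, h n ω ≤ n := fun n ω => min_le_right _ _
    have hh_meas : ∀ n, Measurable[m] (h n) := by
      intro n
      show Measurable[m] fun ω => min |g ω| (n : ℝ)
      have houter : Measurable fun r : ℝ => min |r| (n : ℝ) :=
        measurable_abs.min measurable_const
      exact houter.comp hg_meas
    have hh_meas0 : ∀ n, Measurable[m0] (h n) := fun n => (hh_meas n).mono hm le_rfl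
    -- step A: MCT
    have hmono : ∀ ω, Monotone fun n : ℕ => ENNReal.ofReal (h n ω) := by
      intro ω n k hnk
      exact ENNReal.ofReal_le_ofReal (min_le_min le_rfl (Nat.cast_le.mpr hnk))
    have hsup : ∀ ω, (⨆ n : ℕ, ENNReal.ofReal (h n ω)) = ENNReal.ofReal |g ω| := by
      intro ω
      apply le_antisymm
      · exact iSup_le fun n => ENNReal.ofReal_le_ofReal (min_le_left _ _)
      · refine le_iSup_of_le ⌈|g ω|⌉₊ (le_of_eq ?_)
        show ENNReal.ofReal |g ω| = ENNReal.ofReal (min |g ω| (⌈|g ω|⌉₊ : ℝ))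
        rw [min_eq_left (Nat.le_ceil _)]
    have stepA : (∫⁻ ω, ‖x ω * g ω‖₊ ∂μ)
        = ⨆ n, ∫⁻ ω, (‖x ω‖₊ : ℝ≥0∞) * ENNReal.ofReal (h n ω) ∂μ := by
      calc (∫⁻ ω, ‖x ω * g ω‖₊ ∂μ)
          = ∫⁻ ω, ⨆ n, (‖x ω‖₊ : ℝ≥0∞) * ENNReal.ofReal (h n ω) ∂μ := by
            refine lintegral_congr fun ω => ?_
            rw [← ENNReal.mul_iSup, hsup ω, nnnorm_mul, ENNReal.coe_mul,
              ← enorm_eq_nnnorm (g ω), Real.enorm_eq_ofReal_abs (g ω)]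
        _ = ⨆ n, ∫⁻ ω, (‖x ω‖₊ : ℝ≥0∞) * ENNReal.ofReal (h n ω) ∂μ :=
            lintegral_iSup' (fun n =>
              (hx.aemeasurable.nnnorm.coe_nnreal_ennreal.mul
                (ENNReal.measurable_ofReal.comp (hh_meas0 n)).aemeasurable))
              (Filter.Eventually.of_forall fun ω n k hnk =>
                mul_le_mul_right (hmono ω hnk) _)
    rw [stepA]
    refine iSup_le fun n => ?_
    -- step B
    have hhn_int : Integrable (h n) μ := by
      refine (integrable_const (n : ℝ)).mono' (hh_meas0 n).aestronglyMeasurable ?_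
      filter_upwards with ω
      rw [Real.norm_eq_abs, abs_of_nonneg (hh_nonneg n ω)]
      exact hh_bdd n ω
    have hhx_int : Integrable (h n * fun ω => |x ω|) μ := by
      refine hx_abs.bdd_mul (c := n) (hh_meas0 n).aestronglyMeasurable (Filter.Eventually.of_forall fun ω => ?_)
      rw [Real.norm_eq_abs, abs_of_nonneg (hh_nonneg n ω)]
      exact hh_bdd n ω
    have hpull : μ[h n * fun ω => |x ω| | m] =ᵐ[μ] h n * f := by
      refine condExp_stronglyMeasurable_mul_of_bound hm (hh_meas n).stronglyMeasurable
        hx_abs n ?_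
      filter_upwards with ω
      rw [Real.norm_eq_abs, abs_of_nonneg (hh_nonneg n ω)]
      exact hh_bdd n ω
    have hhf_int : Integrable (h n * f) μ := by
      refine hf_int.bdd_mul (c := n) (hh_meas0 n).aestronglyMeasurable (Filter.Eventually.of_forall fun ω => ?_)
      rw [Real.norm_eq_abs, abs_of_nonneg (hh_nonneg n ω)]
      exact hh_bdd n ω
    have hint_eq : (∫ ω, |x ω| * h n ω ∂μ) = ∫ ω, h n ω * f ω ∂μ := by
      have h1 : (∫ ω, |x ω| * h n ω ∂μ) = ∫ ω, (h n * fun ω => |x ω|) ω ∂μ := by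
        refine integral_congr_ae (Filter.Eventually.of_forall fun ω => ?_)
        simp [mul_comm]
      rw [h1, ← integral_condExp hm, integral_congr_ae hpull]
      rfl
    have hint_le : (∫ ω, h n ω * f ω ∂μ) ≤ L.toReal * ∫ ω, h n ω ∂μ := by
      rw [← integral_const_mul]
      refine integral_mono_ae hhf_int (hhn_int.const_mul _) ?_
      filter_upwards [hf_bdd] with ω hω
      calc h n ω * f ω ≤ h n ω * L.toReal :=
            mul_le_mul_of_nonneg_left hω (hh_nonneg n ω)
        _ = L.toReal * h n ω := mul_comm _ _
    have hofReal_hn : ENNReal.ofReal (∫ ω, h n ω ∂μ) ≤ 1 := by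
      rw [ofReal_integral_eq_lintegral_ofReal hhn_int
        (Filter.Eventually.of_forall (hh_nonneg n))]
      refine le_trans (lintegral_mono fun ω => ?_) hg_norm
      rw [← enorm_eq_nnnorm, Real.enorm_eq_ofReal_abs]
      exact ENNReal.ofReal_le_ofReal (min_le_left _ _)
    calc (∫⁻ ω, (‖x ω‖₊ : ℝ≥0∞) * ENNReal.ofReal (h n ω) ∂μ)
        = ∫⁻ ω, ENNReal.ofReal (|x ω| * h n ω) ∂μ := by
          refine lintegral_congr fun ω => ?_
          rw [ENNReal.ofReal_mul (abs_nonneg _), ← enorm_eq_nnnorm, Real.enorm_eq_ofReal_abs]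
      _ = ENNReal.ofReal (∫ ω, |x ω| * h n ω ∂μ) := by
          rw [ofReal_integral_eq_lintegral_ofReal]
          · exact hhx_int.congr (Filter.Eventually.of_forall fun ω => mul_comm _ _)
          · filter_upwards with ω
            exact mul_nonneg (abs_nonneg _) (hh_nonneg n ω)
      _ ≤ ENNReal.ofReal (L.toReal * ∫ ω, h n ω ∂μ) :=
          ENNReal.ofReal_le_ofReal (hint_eq ▸ hint_le)
      _ = L * ENNReal.ofReal (∫ ω, h n ω ∂μ) := by
          rw [ENNReal.ofReal_mul ENNReal.toReal_nonneg, ENNReal.ofReal_toReal hL_top]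
      _ ≤ L * 1 := mul_le_mul_right hofReal_hn _
      _ = L := mul_one _
end
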